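/- arXiv:1906.10778 — 3 statements merged into one kernel-verified Lean document; each statement's English description precedes it below -/
import Mathlib

section
/- If w = (w₁, w₂) ∈ L²(G, ℝᵐ × ℝⁿ) satisfies the homogeneous system K₁₁(x)w₁(x) + K₁₂(x)w₂(x) + ∫_G [L₁₁(x,y)w₁(y) + L₁₂(x,y)w₂(y)] dy = 0 and K₂₁(x)w₁(x) + K₂₂(x)w₂(x) + ∫_G [L₂₁(x,y)w₁(y) + L₂₂(x,y)w₂(y)] dy = 0 for a.e. x ∈ G, then w₁ = 0 a.e. and w₂ = 0 a.e. -/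
open MeasureTheory Matrix

section Helpers

variable {α : Type*} [MeasurableSpace α] {μ : Measure α}

lemma memLp_proj {k : ℕ} {f : α → Fin k → ℝ} (hf : MemLp f 2 μ) (i : Fin k) :
    MemLp (fun x => f x i) 2 μ :=
  (ContinuousLinearMap.proj (R := ℝ) (φ := fun _ : Fin k => ℝ) i).comp_memLp' hf

lemma integrable_proj {k : ℕ} {f : α → Fin k → ℝ} (hf : Integrable f μ) (i : Fin k) :
    Integrable (fun x => f x i) μ :=
  (ContinuousLinearMap.proj (R := ℝ) (φ := fun _ : Fin k => ℝ) i).integrable_comp hf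

lemma integrable_mul_memLp2 {f g : α → ℝ} (hf : MemLp f 2 μ) (hg : MemLp g 2 μ) :
    Integrable (fun x => f x * g x) μ := by
  rw [← memLp_one_iff_integrable]
  have h : (1 : ENNReal) / 1 = 1 / 2 + 1 / 2 := by
    rw [div_one]; exact (ENNReal.add_halves 1).symm
  exact MemLp.smul (f := g) (φ := f) (r := 1) hg hf

lemma integrable_pi_of_proj {k : ℕ} {V : α → Fin k → ℝ}
    (h : ∀ i, Integrable (fun y => V y i) μ) : Integrable V μ := by
  classical
  have hrepr : V = fun y => ∑ i, (V y i) • (fun j => if j = i then (1 : ℝ) else 0) := by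
    funext y j
    simp [Finset.sum_apply]
  rw [hrepr]
  exact integrable_finset_sum _ fun i _ => (h i).smul_const _

lemma integral_dotProduct {k : ℕ} (c : Fin k → ℝ) {V : α → Fin k → ℝ} (hV : Integrable V μ) :
    c ⬝ᵥ (∫ y, V y ∂μ) = ∫ y, c ⬝ᵥ V y ∂μ := by
  have happ : ∀ i, (∫ y, V y ∂μ) i = ∫ y, V y i ∂μ := fun i =>
    ((ContinuousLinearMap.proj (R := ℝ) (φ := fun _ : Fin k => ℝ) i).integral_comp_comm hV).symm
  simp only [dotProduct, happ]
  rw [integral_finset_sum _ fun i _ => (integrable_proj hV i).const_mul (c i)]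
  exact Finset.sum_congr rfl fun i _ => (integral_const_mul (c i) _).symm

lemma integrable_quadForm {a b : ℕ} {K : α → Matrix (Fin a) (Fin b) ℝ}
    (hm : ∀ i j, Measurable fun x => K x i j) {C : ℝ}
    (hb : ∀ᵐ x ∂μ, ∀ i j, |K x i j| ≤ C)
    {u : α → Fin a → ℝ} {v : α → Fin b → ℝ}
    (hu : MemLp u 2 μ) (hv : MemLp v 2 μ) :
    Integrable (fun x => u x ⬝ᵥ (K x *ᵥ v x)) μ := by
  have hrw : (fun x => u x ⬝ᵥ (K x *ᵥ v x))
      = fun x => ∑ i, ∑ j, K x i j * (u x i * v x j) := by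
    funext x
    simp only [dotProduct, mulVec, Finset.mul_sum]
    exact Finset.sum_congr rfl fun i _ => Finset.sum_congr rfl fun j _ => by ring
  rw [hrw]
  refine integrable_finset_sum _ fun i _ => integrable_finset_sum _ fun j _ => ?_
  refine Integrable.bdd_mul (c := C)
    (integrable_mul_memLp2 (memLp_proj hu i) (memLp_proj hv j))
    ((hm i j).aestronglyMeasurable) ?_
  filter_upwards [hb] with x hx using by simpa [Real.norm_eq_abs] using hx i j

lemma integrable_mulVec {a b : ℕ} {Lk : α → Matrix (Fin a) (Fin b) ℝ}
    (hm : ∀ i j, Measurable fun y => Lk y i j) {C : ℝ}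
    (hb : ∀ᵐ y ∂μ, ∀ i j, |Lk y i j| ≤ C)
    {v : α → Fin b → ℝ} (hv : Integrable v μ) :
    Integrable (fun y => Lk y *ᵥ v y) μ := by
  refine integrable_pi_of_proj fun i => ?_
  have hrw : (fun y => (Lk y *ᵥ v y) i) = fun y => ∑ j, Lk y i j * v y j := by
    funext y; simp [mulVec, dotProduct]
  rw [hrw]
  refine integrable_finset_sum _ fun j _ => ?_
  refine Integrable.bdd_mul (c := C) (integrable_proj hv j) (hm i j).aestronglyMeasurable ?_
  filter_upwards [hb] with y hy using by simpa [Real.norm_eq_abs] using hy i j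

lemma integrable_bilinForm [SFinite μ] {a b : ℕ} {L : α → α → Matrix (Fin a) (Fin b) ℝ}
    (hm : ∀ i j, Measurable fun p : α × α => L p.1 p.2 i j) {C : ℝ}
    (hb : ∀ᵐ p ∂(μ.prod μ), ∀ i j, |L p.1 p.2 i j| ≤ C)
    {u : α → Fin a → ℝ} {v : α → Fin b → ℝ}
    (hu : Integrable u μ) (hv : Integrable v μ) :
    Integrable (fun p : α × α => u p.1 ⬝ᵥ (L p.1 p.2 *ᵥ v p.2)) (μ.prod μ) := by
  have hrw : (fun p : α × α => u p.1 ⬝ᵥ (L p.1 p.2 *ᵥ v p.2))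
      = fun p => ∑ i, ∑ j, L p.1 p.2 i j * (u p.1 i * v p.2 j) := by
    funext p
    simp only [dotProduct, mulVec, Finset.mul_sum]
    exact Finset.sum_congr rfl fun i _ => Finset.sum_congr rfl fun j _ => by ring
  rw [hrw]
  refine integrable_finset_sum _ fun i _ => integrable_finset_sum _ fun j _ => ?_
  refine Integrable.bdd_mul (c := C)
    ((integrable_proj hu i).mul_prod (integrable_proj hv j))
    ((hm i j).aestronglyMeasurable) ?_
  filter_upwards [hb] with p hp using by simpa [Real.norm_eq_abs] using hp i j

lemma quad_zero {k : ℕ} (K : α → Matrix (Fin k) (Fin k) ℝ)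
    (L : α → α → Matrix (Fin k) (Fin k) ℝ) {w : α → Fin k → ℝ}
    (hw : w =ᵐ[μ] 0) :
    (∫ x, w x ⬝ᵥ (K x *ᵥ w x) ∂μ) + (∫ x, ∫ y, w x ⬝ᵥ (L x y *ᵥ w y) ∂μ ∂μ) = 0 := by
  have h1 : (∫ x, w x ⬝ᵥ (K x *ᵥ w x) ∂μ) = 0 := by
    have : (fun x => w x ⬝ᵥ (K x *ᵥ w x)) =ᵐ[μ] 0 := by
      filter_upwards [hw] with x hx
      simp [hx]
    rw [integral_congr_ae this]; simp
  have h2 : ∀ x, (∫ y, w x ⬝ᵥ (L x y *ᵥ w y) ∂μ) = 0 := by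
    intro x
    have : (fun y => w x ⬝ᵥ (L x y *ᵥ w y)) =ᵐ[μ] 0 := by
      filter_upwards [hw] with y hy
      simp [hy]
    rw [integral_congr_ae this]; simp
  simp [h1, h2]

end Helpers

/-- A pair of kernels `(K, L)` is jointly positive definite. -/
def JointlyPosDef {d k : ℕ} (G : Set (Fin d → ℝ))
    (K : (Fin d → ℝ) → Matrix (Fin k) (Fin k) ℝ)
    (L : (Fin d → ℝ) → (Fin d → ℝ) → Matrix (Fin k) (Fin k) ℝ) : Prop :=
  ∀ w : (Fin d → ℝ) → Fin k → ℝ, MemLp w 2 (volume.restrict G) →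
    ¬ (w =ᵐ[volume.restrict G] 0) →
    0 < (∫ x in G, w x ⬝ᵥ (K x *ᵥ w x)) + ∫ x in G, ∫ y in G, w x ⬝ᵥ (L x y *ᵥ w y)

/-- A pair of kernels `(K, L)` is jointly negative definite. -/
def JointlyNegDef {d k : ℕ} (G : Set (Fin d → ℝ))
    (K : (Fin d → ℝ) → Matrix (Fin k) (Fin k) ℝ)
    (L : (Fin d → ℝ) → (Fin d → ℝ) → Matrix (Fin k) (Fin k) ℝ) : Prop :=
  ∀ w : (Fin d → ℝ) → Fin k → ℝ, MemLp w 2 (volume.restrict G) →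
    ¬ (w =ᵐ[volume.restrict G] 0) →
    (∫ x in G, w x ⬝ᵥ (K x *ᵥ w x)) + (∫ x in G, ∫ y in G, w x ⬝ᵥ (L x y *ᵥ w y)) < 0

/-- If `w = (w₁, w₂) ∈ L²` solves the homogeneous system (2.14), then `w₁ = 0` a.e.
and `w₂ = 0` a.e. -/
theorem homogeneous_system_only_trivial_solution
    (d m n : ℕ)
    (G : Set (Fin d → ℝ)) (hGopen : IsOpen G) (hGbdd : Bornology.IsBounded G)
    (K11 : (Fin d → ℝ) → Matrix (Fin m) (Fin m) ℝ)
    (K12 : (Fin d → ℝ) → Matrix (Fin m) (Fin n) ℝ)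
    (K22 : (Fin d → ℝ) → Matrix (Fin n) (Fin n) ℝ)
    (L11 : (Fin d → ℝ) → (Fin d → ℝ) → Matrix (Fin m) (Fin m) ℝ)
    (L12 : (Fin d → ℝ) → (Fin d → ℝ) → Matrix (Fin m) (Fin n) ℝ)
    (L22 : (Fin d → ℝ) → (Fin d → ℝ) → Matrix (Fin n) (Fin n) ℝ)
    -- measurability of the kernels
    (hK11meas : ∀ i j, Measurable fun x => K11 x i j)
    (hK12meas : ∀ i j, Measurable fun x => K12 x i j)
    (hK22meas : ∀ i j, Measurable fun x => K22 x i j)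
    (hL11meas : ∀ i j, Measurable fun p : (Fin d → ℝ) × (Fin d → ℝ) => L11 p.1 p.2 i j)
    (hL12meas : ∀ i j, Measurable fun p : (Fin d → ℝ) × (Fin d → ℝ) => L12 p.1 p.2 i j)
    (hL22meas : ∀ i j, Measurable fun p : (Fin d → ℝ) × (Fin d → ℝ) => L22 p.1 p.2 i j)
    -- boundedness of the kernels
    (hK11bdd : ∃ C, ∀ x ∈ G, ∀ i j, |K11 x i j| ≤ C)
    (hK12bdd : ∃ C, ∀ x ∈ G, ∀ i j, |K12 x i j| ≤ C)
    (hK22bdd : ∃ C, ∀ x ∈ G, ∀ i j, |K22 x i j| ≤ C)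
    (hL11bdd : ∃ C, ∀ x ∈ G, ∀ y ∈ G, ∀ i j, |L11 x y i j| ≤ C)
    (hL12bdd : ∃ C, ∀ x ∈ G, ∀ y ∈ G, ∀ i j, |L12 x y i j| ≤ C)
    (hL22bdd : ∃ C, ∀ x ∈ G, ∀ y ∈ G, ∀ i j, |L22 x y i j| ≤ C)
    -- symmetry of the kernels
    (hK11sym : ∀ x ∈ G, (K11 x)ᵀ = K11 x)
    (hK22sym : ∀ x ∈ G, (K22 x)ᵀ = K22 x)
    (hL11sym : ∀ x ∈ G, ∀ y ∈ G, (L11 x y)ᵀ = L11 y x)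
    (hL22sym : ∀ x ∈ G, ∀ y ∈ G, (L22 x y)ᵀ = L22 y x)
    -- definiteness assumptions
    (hposdef : JointlyPosDef G K11 L11)
    (hnegdef : JointlyNegDef G K22 L22)
    -- w = (w₁, w₂) ∈ L²(G, ℝᵐ × ℝⁿ) solving the homogeneous system a.e. on G
    (w1 : (Fin d → ℝ) → Fin m → ℝ) (w2 : (Fin d → ℝ) → Fin n → ℝ)
    (hw1 : MemLp w1 2 (volume.restrict G)) (hw2 : MemLp w2 2 (volume.restrict G))
    (hsys1 : ∀ᵐ x ∂(volume.restrict G),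
      K11 x *ᵥ w1 x + K12 x *ᵥ w2 x
        + (∫ y in G, (L11 x y *ᵥ w1 y + L12 x y *ᵥ w2 y)) = 0)
    (hsys2 : ∀ᵐ x ∂(volume.restrict G),
      (K12 x)ᵀ *ᵥ w1 x + K22 x *ᵥ w2 x
        + (∫ y in G, ((L12 y x)ᵀ *ᵥ w1 y + L22 x y *ᵥ w2 y)) = 0) :
    w1 =ᵐ[volume.restrict G] 0 ∧ w2 =ᵐ[volume.restrict G] 0 := by
  classical
  have hGm : MeasurableSet G := hGopen.measurableSet
  haveI hfin : IsFiniteMeasure (volume.restrict G : Measure (Fin d → ℝ)) := by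
    constructor
    rw [Measure.restrict_apply_univ]
    exact hGbdd.measure_lt_top
  have haeG : ∀ᵐ x ∂(volume.restrict G : Measure (Fin d → ℝ)), x ∈ G := ae_restrict_mem hGm
  have haeGG : ∀ᵐ p ∂((volume.restrict G : Measure (Fin d → ℝ)).prod (volume.restrict G)),
      p.1 ∈ G ∧ p.2 ∈ G := by
    rw [Measure.prod_restrict]
    filter_upwards [ae_restrict_mem (hGm.prod hGm)] with p hp
    exact ⟨hp.1, hp.2⟩
  obtain ⟨C11, hC11⟩ := hK11bdd
  obtain ⟨C12, hC12⟩ := hK12bdd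
  obtain ⟨C22, hC22⟩ := hK22bdd
  obtain ⟨D11, hD11⟩ := hL11bdd
  obtain ⟨D12, hD12⟩ := hL12bdd
  obtain ⟨D22, hD22⟩ := hL22bdd
  have hK11ae : ∀ᵐ x ∂(volume.restrict G : Measure (Fin d → ℝ)), ∀ i j, |K11 x i j| ≤ C11 := by
    filter_upwards [haeG] with x hx using hC11 x hx
  have hK12ae : ∀ᵐ x ∂(volume.restrict G : Measure (Fin d → ℝ)), ∀ i j, |K12 x i j| ≤ C12 := by
    filter_upwards [haeG] with x hx using hC12 x hx
  have hK22ae : ∀ᵐ x ∂(volume.restrict G : Measure (Fin d → ℝ)), ∀ i j, |K22 x i j| ≤ C22 := by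
    filter_upwards [haeG] with x hx using hC22 x hx
  have hL11ae : ∀ᵐ p ∂((volume.restrict G : Measure (Fin d → ℝ)).prod (volume.restrict G)),
      ∀ i j, |L11 p.1 p.2 i j| ≤ D11 := by
    filter_upwards [haeGG] with p hp using hD11 p.1 hp.1 p.2 hp.2
  have hL12ae : ∀ᵐ p ∂((volume.restrict G : Measure (Fin d → ℝ)).prod (volume.restrict G)),
      ∀ i j, |L12 p.1 p.2 i j| ≤ D12 := by
    filter_upwards [haeGG] with p hp using hD12 p.1 hp.1 p.2 hp.2
  have hL22ae : ∀ᵐ p ∂((volume.restrict G : Measure (Fin d → ℝ)).prod (volume.restrict G)),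
      ∀ i j, |L22 p.1 p.2 i j| ≤ D22 := by
    filter_upwards [haeGG] with p hp using hD22 p.1 hp.1 p.2 hp.2
  have hw1i : Integrable w1 (volume.restrict G) := hw1.integrable one_le_two
  have hw2i : Integrable w2 (volume.restrict G) := hw2.integrable one_le_two
  -- integrability of all scalar integrands
  have hf11 : Integrable (fun x => w1 x ⬝ᵥ (K11 x *ᵥ w1 x)) (volume.restrict G) :=
    integrable_quadForm hK11meas hK11ae hw1 hw1
  have hf12 : Integrable (fun x => w1 x ⬝ᵥ (K12 x *ᵥ w2 x)) (volume.restrict G) :=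
    integrable_quadForm hK12meas hK12ae hw1 hw2
  have hf22 : Integrable (fun x => w2 x ⬝ᵥ (K22 x *ᵥ w2 x)) (volume.restrict G) :=
    integrable_quadForm hK22meas hK22ae hw2 hw2
  have hH11 : Integrable (fun p : (Fin d → ℝ) × (Fin d → ℝ) =>
      w1 p.1 ⬝ᵥ (L11 p.1 p.2 *ᵥ w1 p.2)) ((volume.restrict G).prod (volume.restrict G)) :=
    integrable_bilinForm hL11meas hL11ae hw1i hw1i
  have hH12 : Integrable (fun p : (Fin d → ℝ) × (Fin d → ℝ) =>
      w1 p.1 ⬝ᵥ (L12 p.1 p.2 *ᵥ w2 p.2)) ((volume.restrict G).prod (volume.restrict G)) :=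
    integrable_bilinForm hL12meas hL12ae hw1i hw2i
  have hH22 : Integrable (fun p : (Fin d → ℝ) × (Fin d → ℝ) =>
      w2 p.1 ⬝ᵥ (L22 p.1 p.2 *ᵥ w2 p.2)) ((volume.restrict G).prod (volume.restrict G)) :=
    integrable_bilinForm hL22meas hL22ae hw2i hw2i
  have hH12s : Integrable (fun p : (Fin d → ℝ) × (Fin d → ℝ) =>
      w1 p.2 ⬝ᵥ (L12 p.2 p.1 *ᵥ w2 p.1)) ((volume.restrict G).prod (volume.restrict G)) :=
    hH12.swap
  -- a.e. scalar identity from the first equation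
  have key1 : ∀ᵐ x ∂(volume.restrict G : Measure (Fin d → ℝ)),
      w1 x ⬝ᵥ (K11 x *ᵥ w1 x) + w1 x ⬝ᵥ (K12 x *ᵥ w2 x)
        + ∫ y in G, (w1 x ⬝ᵥ (L11 x y *ᵥ w1 y) + w1 x ⬝ᵥ (L12 x y *ᵥ w2 y)) = 0 := by
    filter_upwards [hsys1, haeG] with x hx hxG
    have hVa : Integrable (fun y => L11 x y *ᵥ w1 y) (volume.restrict G) := by
      refine integrable_mulVec (fun i j => (hL11meas i j).comp measurable_prodMk_left)
        (C := D11) ?_ hw1i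
      filter_upwards [haeG] with y hy using fun i j => hD11 x hxG y hy i j
    have hVb : Integrable (fun y => L12 x y *ᵥ w2 y) (volume.restrict G) := by
      refine integrable_mulVec (fun i j => (hL12meas i j).comp measurable_prodMk_left)
        (C := D12) ?_ hw2i
      filter_upwards [haeG] with y hy using fun i j => hD12 x hxG y hy i j
    have hV : Integrable (fun y => L11 x y *ᵥ w1 y + L12 x y *ᵥ w2 y) (volume.restrict G) :=
      hVa.add hVb
    have hdot := congrArg (fun v => w1 x ⬝ᵥ v) hx
    simp only [dotProduct_add, dotProduct_zero] at hdot
    rw [integral_dotProduct (w1 x) hV] at hdot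
    simpa only [dotProduct_add] using hdot
  -- a.e. scalar identity from the second equation
  have key2 : ∀ᵐ x ∂(volume.restrict G : Measure (Fin d → ℝ)),
      w1 x ⬝ᵥ (K12 x *ᵥ w2 x) + w2 x ⬝ᵥ (K22 x *ᵥ w2 x)
        + ∫ y in G, (w1 y ⬝ᵥ (L12 y x *ᵥ w2 x) + w2 x ⬝ᵥ (L22 x y *ᵥ w2 y)) = 0 := by
    filter_upwards [hsys2, haeG] with x hx hxG
    have hVa : Integrable (fun y => (L12 y x)ᵀ *ᵥ w1 y) (volume.restrict G) := by
      refine integrable_mulVec (Lk := fun y => (L12 y x)ᵀ)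
        (fun i j => (hL12meas j i).comp measurable_prodMk_right) (C := D12) ?_ hw1i
      filter_upwards [haeG] with y hy using fun i j => hD12 y hy x hxG j i
    have hVb : Integrable (fun y => L22 x y *ᵥ w2 y) (volume.restrict G) := by
      refine integrable_mulVec (fun i j => (hL22meas i j).comp measurable_prodMk_left)
        (C := D22) ?_ hw2i
      filter_upwards [haeG] with y hy using fun i j => hD22 x hxG y hy i j
    have hV : Integrable (fun y => (L12 y x)ᵀ *ᵥ w1 y + L22 x y *ᵥ w2 y) (volume.restrict G) :=
      hVa.add hVb
    have hdot := congrArg (fun v => w2 x ⬝ᵥ v) hx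
    simp only [dotProduct_add, dotProduct_zero] at hdot
    rw [integral_dotProduct (w2 x) hV] at hdot
    simp only [dotProduct_add] at hdot
    have e1 : w2 x ⬝ᵥ ((K12 x)ᵀ *ᵥ w1 x) = w1 x ⬝ᵥ (K12 x *ᵥ w2 x) := by
      rw [Matrix.dotProduct_mulVec, Matrix.vecMul_transpose, dotProduct_comm]
    have e2 : (∫ y in G, (w2 x ⬝ᵥ ((L12 y x)ᵀ *ᵥ w1 y) + w2 x ⬝ᵥ (L22 x y *ᵥ w2 y)))
        = ∫ y in G, (w1 y ⬝ᵥ (L12 y x *ᵥ w2 x) + w2 x ⬝ᵥ (L22 x y *ᵥ w2 y)) := by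
      refine integral_congr_ae (Filter.Eventually.of_forall fun y => ?_)
      show w2 x ⬝ᵥ ((L12 y x)ᵀ *ᵥ w1 y) + w2 x ⬝ᵥ (L22 x y *ᵥ w2 y)
          = w1 y ⬝ᵥ (L12 y x *ᵥ w2 x) + w2 x ⬝ᵥ (L22 x y *ᵥ w2 y)
      rw [show w2 x ⬝ᵥ ((L12 y x)ᵀ *ᵥ w1 y) = w1 y ⬝ᵥ (L12 y x *ᵥ w2 x) from by
        rw [Matrix.dotProduct_mulVec, Matrix.vecMul_transpose, dotProduct_comm]]
    rw [e1, e2] at hdot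
    exact hdot
  -- integrate the first identity
  have hinner1 : Integrable (fun x => ∫ y in G,
      (w1 x ⬝ᵥ (L11 x y *ᵥ w1 y) + w1 x ⬝ᵥ (L12 x y *ᵥ w2 y))) (volume.restrict G) :=
    (hH11.add hH12).integral_prod_left
  have eq1 : (∫ x in G, w1 x ⬝ᵥ (K11 x *ᵥ w1 x)) + (∫ x in G, w1 x ⬝ᵥ (K12 x *ᵥ w2 x))
      + (∫ x in G, ∫ y in G,
          (w1 x ⬝ᵥ (L11 x y *ᵥ w1 y) + w1 x ⬝ᵥ (L12 x y *ᵥ w2 y))) = 0 := by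
    have hK1 : Integrable (fun x => w1 x ⬝ᵥ (K11 x *ᵥ w1 x) + w1 x ⬝ᵥ (K12 x *ᵥ w2 x))
        (volume.restrict G) := hf11.add hf12
    rw [← integral_add hf11 hf12, ← integral_add hK1 hinner1]
    have h0 := integral_congr_ae (g := fun _ => (0 : ℝ)) key1
    simpa using h0
  have hsplit1 : (∫ x in G, ∫ y in G,
        (w1 x ⬝ᵥ (L11 x y *ᵥ w1 y) + w1 x ⬝ᵥ (L12 x y *ᵥ w2 y)))
      = (∫ x in G, ∫ y in G, w1 x ⬝ᵥ (L11 x y *ᵥ w1 y))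
        + (∫ x in G, ∫ y in G, w1 x ⬝ᵥ (L12 x y *ᵥ w2 y)) := by
    rw [integral_integral (f := fun x y =>
        w1 x ⬝ᵥ (L11 x y *ᵥ w1 y) + w1 x ⬝ᵥ (L12 x y *ᵥ w2 y)) (hH11.add hH12),
      integral_integral (f := fun x y => w1 x ⬝ᵥ (L11 x y *ᵥ w1 y)) hH11,
      integral_integral (f := fun x y => w1 x ⬝ᵥ (L12 x y *ᵥ w2 y)) hH12]
    exact integral_add hH11 hH12
  -- integrate the second identity
  have hinner2 : Integrable (fun x => ∫ y in G,
      (w1 y ⬝ᵥ (L12 y x *ᵥ w2 x) + w2 x ⬝ᵥ (L22 x y *ᵥ w2 y))) (volume.restrict G) :=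
    (hH12s.add hH22).integral_prod_left
  have eq2 : (∫ x in G, w1 x ⬝ᵥ (K12 x *ᵥ w2 x)) + (∫ x in G, w2 x ⬝ᵥ (K22 x *ᵥ w2 x))
      + (∫ x in G, ∫ y in G,
          (w1 y ⬝ᵥ (L12 y x *ᵥ w2 x) + w2 x ⬝ᵥ (L22 x y *ᵥ w2 y))) = 0 := by
    have hK2 : Integrable (fun x => w1 x ⬝ᵥ (K12 x *ᵥ w2 x) + w2 x ⬝ᵥ (K22 x *ᵥ w2 x))
        (volume.restrict G) := hf12.add hf22
    rw [← integral_add hf12 hf22, ← integral_add hK2 hinner2]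
    have h0 := integral_congr_ae (g := fun _ => (0 : ℝ)) key2
    simpa using h0
  have hsplit2 : (∫ x in G, ∫ y in G,
        (w1 y ⬝ᵥ (L12 y x *ᵥ w2 x) + w2 x ⬝ᵥ (L22 x y *ᵥ w2 y)))
      = (∫ x in G, ∫ y in G, w1 y ⬝ᵥ (L12 y x *ᵥ w2 x))
        + (∫ x in G, ∫ y in G, w2 x ⬝ᵥ (L22 x y *ᵥ w2 y)) := by
    rw [integral_integral (f := fun x y =>
        w1 y ⬝ᵥ (L12 y x *ᵥ w2 x) + w2 x ⬝ᵥ (L22 x y *ᵥ w2 y)) (hH12s.add hH22),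
      integral_integral (f := fun x y => w1 y ⬝ᵥ (L12 y x *ᵥ w2 x)) hH12s,
      integral_integral (f := fun x y => w2 x ⬝ᵥ (L22 x y *ᵥ w2 y)) hH22]
    exact integral_add hH12s hH22
  have hswap : (∫ x in G, ∫ y in G, w1 y ⬝ᵥ (L12 y x *ᵥ w2 x))
      = ∫ x in G, ∫ y in G, w1 x ⬝ᵥ (L12 x y *ᵥ w2 y) :=
    integral_integral_swap (f := fun x y => w1 y ⬝ᵥ (L12 y x *ᵥ w2 x)) hH12s
  -- the two quadratic forms are equal
  have hQeq : (∫ x in G, w1 x ⬝ᵥ (K11 x *ᵥ w1 x))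
        + (∫ x in G, ∫ y in G, w1 x ⬝ᵥ (L11 x y *ᵥ w1 y))
      = (∫ x in G, w2 x ⬝ᵥ (K22 x *ᵥ w2 x))
        + (∫ x in G, ∫ y in G, w2 x ⬝ᵥ (L22 x y *ᵥ w2 y)) := by
    rw [hsplit1] at eq1
    rw [hsplit2, hswap] at eq2
    linarith
  have hw1zero : w1 =ᵐ[volume.restrict G] 0 := by
    by_contra h1
    have hp := hposdef w1 hw1 h1
    have hq2 : (∫ x in G, w2 x ⬝ᵥ (K22 x *ᵥ w2 x))
        + (∫ x in G, ∫ y in G, w2 x ⬝ᵥ (L22 x y *ᵥ w2 y)) ≤ 0 := by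
      by_cases h2 : w2 =ᵐ[volume.restrict G] 0
      · exact le_of_eq (quad_zero K22 L22 h2)
      · exact (hnegdef w2 hw2 h2).le
    linarith
  refine ⟨hw1zero, ?_⟩
  have hq1 : (∫ x in G, w1 x ⬝ᵥ (K11 x *ᵥ w1 x))
      + (∫ x in G, ∫ y in G, w1 x ⬝ᵥ (L11 x y *ᵥ w1 y)) = 0 :=
    quad_zero K11 L11 hw1zero
  by_contra h2
  have hn := hnegdef w2 hw2 h2
  linarith
end

section
/- The kernel L₁₁(t,s) := B₁(t₁,t)ᵀP₀B₁(t₁,s) + ∫_{max(t,s)}^{t₁} B₁(σ,t)ᵀP₁(σ)B₁(σ,s) dσ + ∫_t^{t₁}∫_s^{t₁} B₁(τ,t)ᵀP₂(τ,σ)B₁(σ,s) dσ dτ + Q₂(t,s) satisfies ∫_{t₀}^{t₁}∫_{t₀}^{t₁} w(t)ᵀL₁₁(t,s)w(s) ds dt ≥ 0 for every w ∈ L²(t₀,t₁;ℝᵐ). -/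
open MeasureTheory Matrix intervalIntegral

attribute [local instance] Matrix.normedAddCommGroup Matrix.normedSpace

namespace L11Aux

instance matMS (k n : ℕ) : MeasurableSpace (Matrix (Fin k) (Fin n) ℝ) :=
  inferInstanceAs (MeasurableSpace (Fin k → Fin n → ℝ))
instance matBorel (k n : ℕ) : BorelSpace (Matrix (Fin k) (Fin n) ℝ) :=
  inferInstanceAs (BorelSpace (Fin k → Fin n → ℝ))
instance matSC (k n : ℕ) : SecondCountableTopology (Matrix (Fin k) (Fin n) ℝ) :=
  inferInstanceAs (SecondCountableTopology (Fin k → Fin n → ℝ))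
instance matCEN (k n : ℕ) : ContinuousENorm (Matrix (Fin k) (Fin n) ℝ) :=
  SeminormedAddGroup.toContinuousENorm

variable {α : Type*} [MeasurableSpace α] {ν : Measure α}

noncomputable def dotCLM {n : ℕ} (u : Fin n → ℝ) : (Fin n → ℝ) →L[ℝ] ℝ :=
  LinearMap.toContinuousLinearMap
    { toFun := fun v => u ⬝ᵥ v
      map_add' := fun a b => dotProduct_add u a b
      map_smul' := fun c a => by simp [dotProduct_smul] }

@[simp] lemma dotCLM_apply {n : ℕ} (u v : Fin n → ℝ) : dotCLM u v = u ⬝ᵥ v := rfl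

lemma integral_dot {n : ℕ} (u : Fin n → ℝ) {f : α → Fin n → ℝ} (hf : Integrable f ν) :
    ∫ a, u ⬝ᵥ f a ∂ν = u ⬝ᵥ ∫ a, f a ∂ν := (dotCLM u).integral_comp_comm hf

lemma integral_dot' {n : ℕ} (u : Fin n → ℝ) {f : α → Fin n → ℝ} (hf : Integrable f ν) :
    ∫ a, f a ⬝ᵥ u ∂ν = (∫ a, f a ∂ν) ⬝ᵥ u := by
  simp_rw [dotProduct_comm _ u]; exact integral_dot u hf

noncomputable def quadCLM {k n : ℕ} (u : Fin k → ℝ) (v : Fin n → ℝ) :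
    Matrix (Fin k) (Fin n) ℝ →L[ℝ] ℝ :=
  LinearMap.toContinuousLinearMap
    { toFun := fun A => u ⬝ᵥ (A *ᵥ v)
      map_add' := fun A B => by simp [Matrix.add_mulVec, dotProduct_add]
      map_smul' := fun c A => by simp [Matrix.smul_mulVec, dotProduct_smul] }

@[simp] lemma quadCLM_apply {k n : ℕ} (u : Fin k → ℝ) (v : Fin n → ℝ) (A) :
    quadCLM u v A = u ⬝ᵥ (A *ᵥ v) := rfl

lemma integral_quad {k n : ℕ} (u : Fin k → ℝ) (v : Fin n → ℝ)
    {f : α → Matrix (Fin k) (Fin n) ℝ} (hf : Integrable f ν) :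
    ∫ a, u ⬝ᵥ (f a *ᵥ v) ∂ν = u ⬝ᵥ ((∫ a, f a ∂ν) *ᵥ v) :=
  (quadCLM u v).integral_comp_comm hf

lemma measurable_dot {k : ℕ} {a b : α → Fin k → ℝ} (ha : ∀ i, Measurable fun x => a x i)
    (hb : ∀ i, Measurable fun x => b x i) : Measurable fun x => a x ⬝ᵥ b x := by
  simp only [dotProduct]
  exact Finset.measurable_sum _ fun i _ => (ha i).mul (hb i)

lemma measurable_mulVec {k n : ℕ} {A : α → Matrix (Fin k) (Fin n) ℝ} {b : α → Fin n → ℝ}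
    (hA : ∀ i j, Measurable fun x => A x i j) (hb : ∀ j, Measurable fun x => b x j) (i : Fin k) :
    Measurable fun x => (A x *ᵥ b x) i := by
  simp only [Matrix.mulVec, dotProduct]
  exact Finset.measurable_sum _ fun j _ => (hA i j).mul (hb j)

lemma abs_dot_le {k : ℕ} (a b : Fin k → ℝ) : |a ⬝ᵥ b| ≤ (k : ℝ) * (‖a‖ * ‖b‖) := by
  calc |a ⬝ᵥ b| ≤ ∑ i, |a i * b i| := Finset.abs_sum_le_sum_abs _ _
    _ ≤ ∑ _i : Fin k, ‖a‖ * ‖b‖ := by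
        refine Finset.sum_le_sum fun i _ => ?_
        rw [abs_mul]
        exact mul_le_mul (norm_le_pi_norm a i) (norm_le_pi_norm b i) (abs_nonneg _) (norm_nonneg _)
    _ = (k : ℝ) * (‖a‖ * ‖b‖) := by simp [Finset.sum_const, nsmul_eq_mul]

lemma norm_mulVec_le {k n : ℕ} (A : Matrix (Fin k) (Fin n) ℝ) (b : Fin n → ℝ) {C : ℝ}
    (hC : 0 ≤ C) (hA : ∀ i j, |A i j| ≤ C) : ‖A *ᵥ b‖ ≤ (n : ℝ) * C * ‖b‖ := by
  refine (pi_norm_le_iff_of_nonneg (by positivity)).2 fun i => ?_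
  show |A i ⬝ᵥ b| ≤ _
  calc |A i ⬝ᵥ b| ≤ ∑ j, |A i j * b j| := Finset.abs_sum_le_sum_abs _ _
    _ ≤ ∑ _j : Fin n, C * ‖b‖ := by
        refine Finset.sum_le_sum fun j _ => ?_
        rw [abs_mul]
        exact mul_le_mul (hA i j) (norm_le_pi_norm b j) (abs_nonneg _) hC
    _ = (n : ℝ) * C * ‖b‖ := by simp [Finset.sum_const, nsmul_eq_mul, mul_assoc]

lemma abs_quad_le {k n : ℕ} (u : Fin k → ℝ) (A : Matrix (Fin k) (Fin n) ℝ) (v : Fin n → ℝ)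
    {C : ℝ} (hC : 0 ≤ C) (hA : ∀ i j, |A i j| ≤ C) :
    |u ⬝ᵥ (A *ᵥ v)| ≤ (k : ℝ) * ((n : ℝ) * C) * (‖u‖ * ‖v‖) := by
  calc |u ⬝ᵥ (A *ᵥ v)| ≤ (k : ℝ) * (‖u‖ * ‖A *ᵥ v‖) := abs_dot_le _ _
    _ ≤ (k : ℝ) * (‖u‖ * ((n : ℝ) * C * ‖v‖)) := by
        refine mul_le_mul_of_nonneg_left (mul_le_mul_of_nonneg_left ?_ (norm_nonneg _))
          (by positivity)
        exact norm_mulVec_le A v hC hA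
    _ = (k : ℝ) * ((n : ℝ) * C) * (‖u‖ * ‖v‖) := by ring

lemma integrable_of_bdd {E : Type*} [NormedAddCommGroup E] [IsFiniteMeasure ν] {f : α → E}
    (hm : AEStronglyMeasurable f ν) {C : ℝ} (hb : ∀ᵐ x ∂ν, ‖f x‖ ≤ C) : Integrable f ν :=
  (MemLp.of_bound hm C hb (p := 1)).integrable le_rfl

lemma quad_triple {k n n' : ℕ} (u : Fin n → ℝ) (A : Matrix (Fin k) (Fin n) ℝ)
    (P : Matrix (Fin k) (Fin k) ℝ) (B : Matrix (Fin k) (Fin n') ℝ) (v : Fin n' → ℝ) :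
    u ⬝ᵥ ((Aᵀ * P * B) *ᵥ v) = (A *ᵥ u) ⬝ᵥ (P *ᵥ (B *ᵥ v)) := by
  rw [← Matrix.mulVec_mulVec, ← Matrix.mulVec_mulVec, dotProduct_mulVec, Matrix.vecMul_transpose]

lemma entry_triple {k n n' : ℕ} (A : Matrix (Fin k) (Fin n) ℝ) (P : Matrix (Fin k) (Fin k) ℝ)
    (B : Matrix (Fin k) (Fin n') ℝ) (i : Fin n) (j : Fin n') :
    (Aᵀ * P * B) i j = (fun a => A a i) ⬝ᵥ (P *ᵥ fun b => B b j) := by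
  simp only [Matrix.mul_apply, Matrix.mulVec, dotProduct, Matrix.transpose_apply,
    Finset.sum_mul, Finset.mul_sum]
  rw [Finset.sum_comm]
  simp [mul_assoc]

lemma norm_matrix_le {k n : ℕ} (A : Matrix (Fin k) (Fin n) ℝ) {C : ℝ} (hC : 0 ≤ C)
    (h : ∀ i j, |A i j| ≤ C) : ‖A‖ ≤ C := by
  refine (pi_norm_le_iff_of_nonneg hC).2 fun i => (pi_norm_le_iff_of_nonneg hC).2 fun j => ?_
  exact h i j

lemma entry_triple_bound {k n n' : ℕ} (A : Matrix (Fin k) (Fin n) ℝ)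
    (P : Matrix (Fin k) (Fin k) ℝ) (B : Matrix (Fin k) (Fin n') ℝ) {CA CP CB : ℝ}
    (hCA : 0 ≤ CA) (hCP : 0 ≤ CP) (hCB : 0 ≤ CB)
    (hA : ∀ a i, |A a i| ≤ CA) (hP : ∀ a b, |P a b| ≤ CP) (hB : ∀ b j, |B b j| ≤ CB)
    (i : Fin n) (j : Fin n') :
    |(Aᵀ * P * B) i j| ≤ (k : ℝ) * ((k : ℝ) * CP) * (CA * CB) := by
  rw [entry_triple]
  refine (abs_quad_le _ _ _ hCP hP).trans ?_
  refine mul_le_mul_of_nonneg_left ?_ (by positivity)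
  have h1 : ‖(fun a => A a i)‖ ≤ CA := (pi_norm_le_iff_of_nonneg hCA).2 fun a => hA a i
  have h2 : ‖(fun b => B b j)‖ ≤ CB := (pi_norm_le_iff_of_nonneg hCB).2 fun b => hB b j
  exact mul_le_mul h1 h2 (norm_nonneg _) hCA

lemma measurable_entry_triple {k n n' : ℕ} {A : α → Matrix (Fin k) (Fin n) ℝ}
    {P : α → Matrix (Fin k) (Fin k) ℝ} {B : α → Matrix (Fin k) (Fin n') ℝ}
    (hA : ∀ a i, Measurable fun x => A x a i) (hP : ∀ a b, Measurable fun x => P x a b)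
    (hB : ∀ b j, Measurable fun x => B x b j) (i : Fin n) (j : Fin n') :
    Measurable fun x => ((A x)ᵀ * P x * B x) i j := by
  simp_rw [entry_triple]
  exact measurable_dot (fun a => hA a i) (measurable_mulVec hP (fun b => hB b j))

end L11Aux

set_option maxHeartbeats 1000000 in
/-- **Nonnegativity of the kernel `L₁₁` of (4.6)**: if `P₀`, `P₁`, `P₂` and `Q₂` are
(semi)definite as indicated, then `∫∫ w(t)ᵀL₁₁(t,s)w(s) ds dt ≥ 0` for every
`w ∈ L²(t₀,t₁;ℝᵐ)`. -/
theorem L11_kernel_nonneg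
    (p m : ℕ) (t0 t1 : ℝ) (ht : t0 < t1)
    (B1 : ℝ → ℝ → Matrix (Fin p) (Fin m) ℝ)
    (P0 : Matrix (Fin p) (Fin p) ℝ)
    (P1 : ℝ → Matrix (Fin p) (Fin p) ℝ)
    (P2 : ℝ → ℝ → Matrix (Fin p) (Fin p) ℝ)
    (Q2 : ℝ → ℝ → Matrix (Fin m) (Fin m) ℝ)
    -- B₁ bounded measurable on Δ
    (hB1meas : ∀ i j, Measurable fun q : ℝ × ℝ => B1 q.1 q.2 i j)
    (hB1bdd : ∃ M, ∀ t s, t0 ≤ s → s ≤ t → t ≤ t1 → ∀ i j, |B1 t s i j| ≤ M)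
    -- P₀ symmetric positive semidefinite
    (hP0sym : P0ᵀ = P0)
    (hP0 : ∀ z : Fin p → ℝ, 0 ≤ z ⬝ᵥ (P0 *ᵥ z))
    -- P₁ bounded measurable, symmetric positive semidefinite a.e.
    (hP1meas : ∀ i j, Measurable fun t => P1 t i j)
    (hP1bdd : ∃ M, ∀ t ∈ Set.Icc t0 t1, ∀ i j, |P1 t i j| ≤ M)
    (hP1 : ∀ᵐ t ∂(volume.restrict (Set.Ioc t0 t1)),
      (P1 t)ᵀ = P1 t ∧ ∀ z : Fin p → ℝ, 0 ≤ z ⬝ᵥ (P1 t *ᵥ z))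
    -- P₂ bounded measurable, symmetric, with nonnegative integral quadratic form
    (hP2meas : ∀ i j, Measurable fun q : ℝ × ℝ => P2 q.1 q.2 i j)
    (hP2bdd : ∃ M, ∀ t ∈ Set.Icc t0 t1, ∀ s ∈ Set.Icc t0 t1, ∀ i j, |P2 t s i j| ≤ M)
    (hP2sym : ∀ t s, (P2 t s)ᵀ = P2 s t)
    (hP2 : ∀ z : ℝ → Fin p → ℝ, MemLp z 2 (volume.restrict (Set.Ioc t0 t1)) →
      0 ≤ ∫ t in Set.Ioc t0 t1, ∫ s in Set.Ioc t0 t1, z t ⬝ᵥ (P2 t s *ᵥ z s))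
    -- Q₂ bounded measurable, symmetric, with nonnegative integral quadratic form
    (hQ2meas : ∀ i j, Measurable fun q : ℝ × ℝ => Q2 q.1 q.2 i j)
    (hQ2bdd : ∃ M, ∀ t ∈ Set.Icc t0 t1, ∀ s ∈ Set.Icc t0 t1, ∀ i j, |Q2 t s i j| ≤ M)
    (hQ2sym : ∀ t s, (Q2 t s)ᵀ = Q2 s t)
    (hQ2 : ∀ w : ℝ → Fin m → ℝ, MemLp w 2 (volume.restrict (Set.Ioc t0 t1)) →
      0 ≤ ∫ t in Set.Ioc t0 t1, ∫ s in Set.Ioc t0 t1, w t ⬝ᵥ (Q2 t s *ᵥ w s)) :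
    ∀ w : ℝ → Fin m → ℝ, MemLp w 2 (volume.restrict (Set.Ioc t0 t1)) →
      0 ≤ ∫ t in Set.Ioc t0 t1, ∫ s in Set.Ioc t0 t1,
        w t ⬝ᵥ (((B1 t1 t)ᵀ * P0 * B1 t1 s
          + (∫ σ in (max t s)..t1, (B1 σ t)ᵀ * P1 σ * B1 σ s)
          + (∫ τ in t..t1, ∫ σ in s..t1, (B1 τ t)ᵀ * P2 τ σ * B1 σ s)
          + Q2 t s) *ᵥ w s) := by
  classical
  intro w hw
  obtain ⟨MB, hMB⟩ := hB1bdd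
  obtain ⟨M1, hM1⟩ := hP1bdd
  obtain ⟨M2, hM2⟩ := hP2bdd
  set I : Set ℝ := Set.Ioc t0 t1 with hIdef
  set μ : Measure ℝ := volume.restrict I with hμdef
  have hImeas : MeasurableSet I := measurableSet_Ioc
  have haeI : ∀ᵐ x ∂μ, x ∈ I := ae_restrict_mem hImeas
  have haeI2 : ∀ᵐ q : ℝ × ℝ ∂(μ.prod μ), q.1 ∈ I ∧ q.2 ∈ I := by
    rw [hμdef, Measure.prod_restrict]
    filter_upwards [ae_restrict_mem (hImeas.prod hImeas)] with q hq
    exact ⟨hq.1, hq.2⟩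
  -- measurable representative of w
  set w' : ℝ → Fin m → ℝ := hw.1.mk w with hw'def
  have hw'sm : StronglyMeasurable w' := hw.1.stronglyMeasurable_mk
  have hww' : w =ᵐ[μ] w' := hw.1.ae_eq_mk
  have hw' : MemLp w' 2 μ := hw.ae_eq hww'
  have hw'c : ∀ i, Measurable fun t => w' t i :=
    fun i => (measurable_pi_apply i).comp hw'sm.measurable
  have hwInt : Integrable w' μ := hw'.integrable one_le_two
  have hwn : Integrable (fun t => ‖w' t‖) μ := hwInt.norm
  -- constants
  set CB : ℝ := max MB 0 with hCBdef
  have hCB : 0 ≤ CB := le_max_right _ _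
  have hBbd : ∀ ⦃σ t : ℝ⦄, t0 ≤ t → t ≤ σ → σ ≤ t1 → ∀ i j, |B1 σ t i j| ≤ CB :=
    fun σ t h1 h2 h3 i j => (hMB σ t h1 h2 h3 i j).trans (le_max_left _ _)
  set C1 : ℝ := max M1 0 with hC1def
  have hC1 : 0 ≤ C1 := le_max_right _ _
  have hP1bd : ∀ σ ∈ Set.Icc t0 t1, ∀ i j, |P1 σ i j| ≤ C1 :=
    fun σ hσ i j => (hM1 σ hσ i j).trans (le_max_left _ _)
  set C2 : ℝ := max M2 0 with hC2def
  have hC2 : 0 ≤ C2 := le_max_right _ _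
  have hP2bd : ∀ τ ∈ Set.Icc t0 t1, ∀ σ ∈ Set.Icc t0 t1, ∀ i j, |P2 τ σ i j| ≤ C2 :=
    fun τ hτ σ hσ i j => (hM2 τ hτ σ hσ i j).trans (le_max_left _ _)
  have hIsub : I ⊆ Set.Icc t0 t1 := Set.Ioc_subset_Icc_self
  obtain ⟨MQ, hMQ⟩ := hQ2bdd
  set CQ : ℝ := max MQ 0 with hCQdef
  have hCQ : 0 ≤ CQ := le_max_right _ _
  have hQ2bd : ∀ t ∈ Set.Icc t0 t1, ∀ s ∈ Set.Icc t0 t1, ∀ i j, |Q2 t s i j| ≤ CQ :=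
    fun t ht s hs i j => (hMQ t ht s hs i j).trans (le_max_left _ _)
  -- the basic vector fields
  set φ : ℝ → ℝ → Fin p → ℝ := fun σ t => B1 σ t *ᵥ w' t with hφdef
  set ζ : ℝ → ℝ → Fin p → ℝ := fun σ t => if t < σ then φ σ t else 0 with hζdef
  set z : ℝ → Fin p → ℝ := fun σ => ∫ t, ζ σ t ∂μ with hzdef
  have hφm : ∀ i, Measurable fun q : ℝ × ℝ => φ q.1 q.2 i := by
    intro i
    exact L11Aux.measurable_mulVec (A := fun q : ℝ × ℝ => B1 q.1 q.2) (b := fun q => w' q.2)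
      hB1meas (fun j => (hw'c j).comp measurable_snd) i
  have hζm : ∀ i, Measurable fun q : ℝ × ℝ => ζ q.1 q.2 i := by
    intro i
    have hset : MeasurableSet {q : ℝ × ℝ | q.2 < q.1} :=
      measurableSet_lt measurable_snd measurable_fst
    have : (fun q : ℝ × ℝ => ζ q.1 q.2 i)
        = fun q : ℝ × ℝ => if q.2 < q.1 then φ q.1 q.2 i else 0 := by
      funext q; simp only [hζdef]; by_cases h : q.2 < q.1 <;> simp [h]
    rw [this]
    exact Measurable.ite hset (hφm i) measurable_const
  have hζm1 : ∀ σ i, Measurable fun t => ζ σ t i := fun σ i =>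
    (hζm i).comp (measurable_const.prodMk measurable_id)
  have hφbd : ∀ σ t, t0 ≤ t → t ≤ σ → σ ≤ t1 → ‖φ σ t‖ ≤ (m * CB) * ‖w' t‖ := by
    intro σ t h1 h2 h3
    simpa [mul_assoc] using
      L11Aux.norm_mulVec_le (B1 σ t) (w' t) hCB (fun i j => hBbd h1 h2 h3 i j)
  have hζbd : ∀ σ t, σ ≤ t1 → t0 ≤ t → ‖ζ σ t‖ ≤ (m * CB) * ‖w' t‖ := by
    intro σ t h3 h1
    by_cases h : t < σ
    · simp only [hζdef, if_pos h]; exact hφbd σ t h1 h.le h3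
    · simp only [hζdef, if_neg h, norm_zero]; positivity
  have hζi : ∀ σ, σ ≤ t1 → Integrable (ζ σ) μ := by
    intro σ hσ
    refine (hwn.const_mul (m * CB)).mono' ?_ ?_
    · exact (measurable_pi_lambda _ fun i => hζm1 σ i).aestronglyMeasurable
    · filter_upwards [haeI] with t htI
      exact hζbd σ t hσ htI.1.le
  have hζsmJ : StronglyMeasurable fun q : ℝ × ℝ => ζ q.1 q.2 :=
    (measurable_pi_lambda _ fun i => hζm i).stronglyMeasurable
  have hzsm : StronglyMeasurable z := by
    rw [hzdef]; exact hζsmJ.integral_prod_right'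
  have hzc : ∀ i, Measurable fun σ => z σ i :=
    fun i => (measurable_pi_apply i).comp hzsm.measurable
  set Cw : ℝ := ∫ t, ‖w' t‖ ∂μ with hCwdef
  have hCw : 0 ≤ Cw := integral_nonneg fun t => norm_nonneg _
  set Cz : ℝ := m * CB * Cw with hCzdef
  have hCz : 0 ≤ Cz := by positivity
  have hzbd : ∀ σ, σ ≤ t1 → ‖z σ‖ ≤ Cz := by
    intro σ hσ
    refine (MeasureTheory.norm_integral_le_of_norm_le (hwn.const_mul (m * CB)) ?_).trans ?_
    · filter_upwards [haeI] with t htI; exact hζbd σ t hσ htI.1.le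
    · rw [MeasureTheory.integral_const_mul]
  have hz2 : MemLp z 2 μ :=
    MemLp.of_bound hzsm.aestronglyMeasurable Cz
      (by filter_upwards [haeI] with σ hσ; exact hzbd σ hσ.2)
  have hzi : Integrable z μ :=
    L11Aux.integrable_of_bdd hzsm.aestronglyMeasurable
      (by filter_upwards [haeI] with σ hσ; exact hzbd σ hσ.2)
  -- scalar kernels
  set G1 : ℝ → ℝ → ℝ → ℝ := fun t s σ => ζ σ t ⬝ᵥ (P1 σ *ᵥ ζ σ s) with hG1def
  set G2 : ℝ → ℝ → ℝ → ℝ → ℝ := fun t s τ σ => ζ τ t ⬝ᵥ (P2 τ σ *ᵥ ζ σ s) with hG2def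
  set E0 : ℝ → ℝ → ℝ := fun t s => φ t1 t ⬝ᵥ (P0 *ᵥ φ t1 s) with hE0def
  set E1 : ℝ → ℝ → ℝ := fun t s => ∫ σ, G1 t s σ ∂μ with hE1def
  set E2 : ℝ → ℝ → ℝ := fun t s => ∫ τ, ∫ σ, G2 t s τ σ ∂μ ∂μ with hE2def
  set E3 : ℝ → ℝ → ℝ := fun t s => w' t ⬝ᵥ (Q2 t s *ᵥ w' s) with hE3def
  -- joint measurability of the kernels
  have mG1 : Measurable fun r : ℝ × ℝ × ℝ => G1 r.1 r.2.1 r.2.2 := by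
    refine L11Aux.measurable_dot (a := fun r : ℝ × ℝ × ℝ => ζ r.2.2 r.1)
      (b := fun r : ℝ × ℝ × ℝ => P1 r.2.2 *ᵥ ζ r.2.2 r.2.1) ?_ ?_
    · exact fun i => (hζm i).comp (measurable_snd.snd.prodMk measurable_fst)
    · intro i
      exact L11Aux.measurable_mulVec (A := fun r : ℝ × ℝ × ℝ => P1 r.2.2)
        (b := fun r : ℝ × ℝ × ℝ => ζ r.2.2 r.2.1)
        (fun i j => (hP1meas i j).comp measurable_snd.snd)
        (fun j => (hζm j).comp (measurable_snd.snd.prodMk measurable_snd.fst)) i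
  have mG2 : Measurable fun r : ℝ × ℝ × ℝ × ℝ => G2 r.1 r.2.1 r.2.2.1 r.2.2.2 := by
    refine L11Aux.measurable_dot (a := fun r : ℝ × ℝ × ℝ × ℝ => ζ r.2.2.1 r.1)
      (b := fun r : ℝ × ℝ × ℝ × ℝ => P2 r.2.2.1 r.2.2.2 *ᵥ ζ r.2.2.2 r.2.1) ?_ ?_
    · exact fun i => (hζm i).comp (measurable_snd.snd.fst.prodMk measurable_fst)
    · intro i
      exact L11Aux.measurable_mulVec (A := fun r : ℝ × ℝ × ℝ × ℝ => P2 r.2.2.1 r.2.2.2)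
        (b := fun r : ℝ × ℝ × ℝ × ℝ => ζ r.2.2.2 r.2.1)
        (fun i j => (hP2meas i j).comp (measurable_snd.snd.fst.prodMk measurable_snd.snd.snd))
        (fun j => (hζm j).comp (measurable_snd.snd.snd.prodMk measurable_snd.fst)) i
  -- bounds on the kernels
  set K1 : ℝ := (p : ℝ) * ((p : ℝ) * C1) * ((m * CB) * (m * CB)) with hK1def
  have hK1 : 0 ≤ K1 := by positivity
  have hG1bd : ∀ t s σ, t0 ≤ t → t0 ≤ s → σ ∈ I →
      |G1 t s σ| ≤ K1 * (‖w' t‖ * ‖w' s‖) := by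
    intro t s σ htt hss hσ
    have h1 : |G1 t s σ| ≤ (p : ℝ) * ((p : ℝ) * C1) * (‖ζ σ t‖ * ‖ζ σ s‖) :=
      L11Aux.abs_quad_le _ _ _ hC1 (hP1bd σ (hIsub hσ))
    refine h1.trans ?_
    rw [hK1def, mul_assoc ((p : ℝ) * ((p : ℝ) * C1))]
    refine mul_le_mul_of_nonneg_left ?_ (by positivity)
    calc ‖ζ σ t‖ * ‖ζ σ s‖ ≤ ((m * CB) * ‖w' t‖) * ((m * CB) * ‖w' s‖) :=
          mul_le_mul (hζbd σ t hσ.2 htt) (hζbd σ s hσ.2 hss) (norm_nonneg _) (by positivity)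
      _ = (m * CB) * (m * CB) * (‖w' t‖ * ‖w' s‖) := by ring
  set K2 : ℝ := (p : ℝ) * ((p : ℝ) * C2) * ((m * CB) * (m * CB)) with hK2def
  have hK2 : 0 ≤ K2 := by positivity
  have hG2bd : ∀ t s τ σ, t0 ≤ t → t0 ≤ s → τ ∈ I → σ ∈ I →
      |G2 t s τ σ| ≤ K2 * (‖w' t‖ * ‖w' s‖) := by
    intro t s τ σ htt hss hτ hσ
    have h1 : |G2 t s τ σ| ≤ (p : ℝ) * ((p : ℝ) * C2) * (‖ζ τ t‖ * ‖ζ σ s‖) :=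
      L11Aux.abs_quad_le _ _ _ hC2 (hP2bd τ (hIsub hτ) σ (hIsub hσ))
    refine h1.trans ?_
    rw [hK2def, mul_assoc ((p : ℝ) * ((p : ℝ) * C2))]
    refine mul_le_mul_of_nonneg_left ?_ (by positivity)
    calc ‖ζ τ t‖ * ‖ζ σ s‖ ≤ ((m * CB) * ‖w' t‖) * ((m * CB) * ‖w' s‖) :=
          mul_le_mul (hζbd τ t hτ.2 htt) (hζbd σ s hσ.2 hss) (norm_nonneg _) (by positivity)
      _ = (m * CB) * (m * CB) * (‖w' t‖ * ‖w' s‖) := by ring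
  set V : ℝ := (μ Set.univ).toReal with hVdef
  have hV : 0 ≤ V := ENNReal.toReal_nonneg
  -- integrability helpers on the product space
  have intOfBd : ∀ F : ℝ × ℝ → ℝ, AEStronglyMeasurable F (μ.prod μ) → ∀ c : ℝ,
      (∀ᵐ q ∂μ.prod μ, |F q| ≤ c * (‖w' q.1‖ * ‖w' q.2‖)) → Integrable F (μ.prod μ) := by
    intro F hF c hb
    refine ((hwn.const_mul c).mul_prod hwn).mono' hF ?_
    filter_upwards [hb] with q hq
    simpa [Real.norm_eq_abs, mul_assoc] using hq
  have intOfBd1 : ∀ F : ℝ × ℝ → ℝ, AEStronglyMeasurable F (μ.prod μ) → ∀ c : ℝ,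
      (∀ᵐ q ∂μ.prod μ, |F q| ≤ c * ‖w' q.1‖) → Integrable F (μ.prod μ) := by
    intro F hF c hb
    refine ((hwn.const_mul c).mul_prod (integrable_const 1)).mono' hF ?_
    filter_upwards [hb] with q hq
    simpa [Real.norm_eq_abs] using hq

  -- pointwise reductions of the four kernel pieces
  have R0 : ∀ t s : ℝ, w' t ⬝ᵥ (((B1 t1 t)ᵀ * P0 * B1 t1 s) *ᵥ w' s) = E0 t s := by
    intro t s
    rw [L11Aux.quad_triple]
  set CK1 : ℝ := (p : ℝ) * ((p : ℝ) * C1) * (CB * CB) with hCK1def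
  have hCK1 : 0 ≤ CK1 :=
    mul_nonneg (mul_nonneg (Nat.cast_nonneg p) (mul_nonneg (Nat.cast_nonneg p) hC1))
      (mul_nonneg hCB hCB)
  have R1 : ∀ t ∈ I, ∀ s ∈ I,
      w' t ⬝ᵥ ((∫ σ in (max t s)..t1, (B1 σ t)ᵀ * P1 σ * B1 σ s) *ᵥ w' s) = E1 t s := by
    intro t htI s hsI
    have hmax1 : max t s ≤ t1 := max_le htI.2 hsI.2
    have hmax0 : t0 < max t s := lt_of_lt_of_le htI.1 (le_max_left _ _)
    have hsub : Set.Ioc (max t s) t1 ⊆ I := fun σ hσ => ⟨hmax0.trans hσ.1, hσ.2⟩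
    have hKm : ∀ i j, Measurable fun σ => ((B1 σ t)ᵀ * P1 σ * B1 σ s) i j := by
      intro i j
      exact L11Aux.measurable_entry_triple (A := fun σ => B1 σ t) (P := P1)
        (B := fun σ => B1 σ s)
        (fun a i => (hB1meas a i).comp (measurable_id.prodMk measurable_const))
        (fun a b => hP1meas a b)
        (fun b j => (hB1meas b j).comp (measurable_id.prodMk measurable_const)) i j
    have hKint : IntegrableOn (fun σ => (B1 σ t)ᵀ * P1 σ * B1 σ s)
        (Set.Ioc (max t s) t1) volume := by
      refine L11Aux.integrable_of_bdd ?_ (C := CK1) ?_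
      · exact (measurable_pi_lambda _ fun i => measurable_pi_lambda _ fun j =>
          hKm i j).stronglyMeasurable.aestronglyMeasurable
      · filter_upwards [ae_restrict_mem measurableSet_Ioc] with σ hσ
        refine L11Aux.norm_matrix_le _ hCK1 fun i j => ?_
        refine L11Aux.entry_triple_bound _ _ _ hCB hC1 hCB ?_ ?_ ?_ i j
        · exact fun a i => hBbd htI.1.le (lt_of_le_of_lt (le_max_left t s) hσ.1).le hσ.2 a i
        · exact fun a b => hP1bd σ ⟨(hmax0.trans hσ.1).le, hσ.2⟩ a b
        · exact fun b j => hBbd hsI.1.le (lt_of_le_of_lt (le_max_right t s) hσ.1).le hσ.2 b j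
    rw [intervalIntegral.integral_of_le hmax1, ← L11Aux.integral_quad (w' t) (w' s) hKint]
    have hres : μ.restrict (Set.Ioc (max t s) t1) = volume.restrict (Set.Ioc (max t s) t1) := by
      rw [hμdef, Measure.restrict_restrict measurableSet_Ioc, Set.inter_eq_left.2 hsub]
    rw [hE1def]
    calc (∫ σ in Set.Ioc (max t s) t1,
            w' t ⬝ᵥ (((B1 σ t)ᵀ * P1 σ * B1 σ s) *ᵥ w' s))
        = ∫ σ, (Set.Ioc (max t s) t1).indicator
            (fun σ => w' t ⬝ᵥ (((B1 σ t)ᵀ * P1 σ * B1 σ s) *ᵥ w' s)) σ ∂μ := by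
          rw [MeasureTheory.integral_indicator measurableSet_Ioc, hres]
      _ = ∫ σ, G1 t s σ ∂μ := by
          refine integral_congr_ae ?_
          filter_upwards [haeI] with σ hσ
          by_cases hmem : σ ∈ Set.Ioc (max t s) t1
          · rw [Set.indicator_of_mem hmem, L11Aux.quad_triple]
            have h1 : t < σ := lt_of_le_of_lt (le_max_left t s) hmem.1
            have h2 : s < σ := lt_of_le_of_lt (le_max_right t s) hmem.1
            simp [hG1def, hζdef, hφdef, h1, h2]
          · rw [Set.indicator_of_notMem hmem]
            have hle : σ ≤ max t s := by
              by_contra hcon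
              exact hmem ⟨lt_of_not_ge hcon, hσ.2⟩
            rcases le_max_iff.1 hle with h | h
            · simp [hG1def, hζdef, not_lt.2 h]
            · simp [hG1def, hζdef, not_lt.2 h]
  set CK2 : ℝ := (p : ℝ) * ((p : ℝ) * C2) * (CB * CB) with hCK2def
  have hCK2 : 0 ≤ CK2 :=
    mul_nonneg (mul_nonneg (Nat.cast_nonneg p) (mul_nonneg (Nat.cast_nonneg p) hC2))
      (mul_nonneg hCB hCB)
  have R2 : ∀ t ∈ I, ∀ s ∈ I,
      w' t ⬝ᵥ ((∫ τ in t..t1, ∫ σ in s..t1, (B1 τ t)ᵀ * P2 τ σ * B1 σ s) *ᵥ w' s) = E2 t s := by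
    intro t htI s hsI
    have htsub : Set.Ioc t t1 ⊆ I := fun τ hτ => ⟨htI.1.trans hτ.1, hτ.2⟩
    have hssub : Set.Ioc s t1 ⊆ I := fun σ hσ => ⟨hsI.1.trans hσ.1, hσ.2⟩
    have hKm : ∀ i j, Measurable fun q : ℝ × ℝ => ((B1 q.1 t)ᵀ * P2 q.1 q.2 * B1 q.2 s) i j := by
      intro i j
      exact L11Aux.measurable_entry_triple (A := fun q : ℝ × ℝ => B1 q.1 t)
        (P := fun q : ℝ × ℝ => P2 q.1 q.2) (B := fun q : ℝ × ℝ => B1 q.2 s)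
        (fun a i => (hB1meas a i).comp (measurable_fst.prodMk measurable_const))
        (fun a b => hP2meas a b)
        (fun b j => (hB1meas b j).comp (measurable_snd.prodMk measurable_const)) i j
    have hKbd : ∀ τ ∈ Set.Ioc t t1, ∀ σ ∈ Set.Ioc s t1, ∀ i j,
        |((B1 τ t)ᵀ * P2 τ σ * B1 σ s) i j| ≤ CK2 := by
      intro τ hτ σ hσ i j
      refine L11Aux.entry_triple_bound _ _ _ hCB hC2 hCB ?_ ?_ ?_ i j
      · exact fun a i => hBbd htI.1.le hτ.1.le hτ.2 a i
      · exact fun a b => hP2bd τ (hIsub (htsub hτ)) σ (hIsub (hssub hσ)) a b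
      · exact fun b j => hBbd hsI.1.le hσ.1.le hσ.2 b j
    have hInSM : StronglyMeasurable
        fun τ => ∫ σ in Set.Ioc s t1, (B1 τ t)ᵀ * P2 τ σ * B1 σ s := by
      exact ((measurable_pi_lambda _ fun i => measurable_pi_lambda _ fun j =>
        hKm i j).stronglyMeasurable).integral_prod_right'
    have hInner_int : ∀ τ ∈ Set.Ioc t t1,
        IntegrableOn (fun σ => (B1 τ t)ᵀ * P2 τ σ * B1 σ s) (Set.Ioc s t1) volume := by
      intro τ hτ
      refine L11Aux.integrable_of_bdd ?_ (C := CK2) ?_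
      · exact ((measurable_pi_lambda _ fun i => measurable_pi_lambda _ fun j =>
          (hKm i j).comp
            (measurable_const.prodMk measurable_id))).stronglyMeasurable.aestronglyMeasurable
      · filter_upwards [ae_restrict_mem measurableSet_Ioc] with σ hσ
        exact L11Aux.norm_matrix_le _ hCK2 fun i j => hKbd τ hτ σ hσ i j
    have hOuter_int : IntegrableOn
        (fun τ => ∫ σ in Set.Ioc s t1, (B1 τ t)ᵀ * P2 τ σ * B1 σ s)
        (Set.Ioc t t1) volume := by
      refine L11Aux.integrable_of_bdd hInSM.aestronglyMeasurable (C := CK2 * (t1 - t0)) ?_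
      filter_upwards [ae_restrict_mem measurableSet_Ioc] with τ hτ
      refine (MeasureTheory.norm_integral_le_of_norm_le (integrable_const CK2) ?_).trans ?_
      · filter_upwards [ae_restrict_mem measurableSet_Ioc] with σ hσ
        exact L11Aux.norm_matrix_le _ hCK2 fun i j => hKbd τ hτ σ hσ i j
      · rw [setIntegral_const, measureReal_def, Real.volume_Ioc,
          ENNReal.toReal_ofReal (by linarith [hsI.2] : (0:ℝ) ≤ t1 - s), smul_eq_mul]
        have hle : t1 - s ≤ t1 - t0 := by
          have := hsI.1; linarith
        calc (t1 - s) * CK2 ≤ (t1 - t0) * CK2 := mul_le_mul_of_nonneg_right hle hCK2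
          _ = CK2 * (t1 - t0) := mul_comm _ _
    rw [intervalIntegral.integral_of_le htI.2]
    have hconv : ∀ τ, (∫ σ in s..t1, (B1 τ t)ᵀ * P2 τ σ * B1 σ s)
        = ∫ σ in Set.Ioc s t1, (B1 τ t)ᵀ * P2 τ σ * B1 σ s :=
      fun τ => intervalIntegral.integral_of_le hsI.2
    simp_rw [hconv]
    rw [← L11Aux.integral_quad (w' t) (w' s) hOuter_int]
    have hres' : μ.restrict (Set.Ioc t t1) = volume.restrict (Set.Ioc t t1) := by
      rw [hμdef, Measure.restrict_restrict measurableSet_Ioc, Set.inter_eq_left.2 htsub]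
    have hstep1 : ∀ τ ∈ Set.Ioc t t1,
        w' t ⬝ᵥ ((∫ σ in Set.Ioc s t1, (B1 τ t)ᵀ * P2 τ σ * B1 σ s) *ᵥ w' s)
          = ∫ σ, G2 t s τ σ ∂μ := by
      intro τ hτ
      rw [← L11Aux.integral_quad (w' t) (w' s) (hInner_int τ hτ)]
      have hres : μ.restrict (Set.Ioc s t1) = volume.restrict (Set.Ioc s t1) := by
        rw [hμdef, Measure.restrict_restrict measurableSet_Ioc, Set.inter_eq_left.2 hssub]
      rw [show (∫ σ in Set.Ioc s t1, w' t ⬝ᵥ (((B1 τ t)ᵀ * P2 τ σ * B1 σ s) *ᵥ w' s))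
          = ∫ σ, (Set.Ioc s t1).indicator
              (fun σ => w' t ⬝ᵥ (((B1 τ t)ᵀ * P2 τ σ * B1 σ s) *ᵥ w' s)) σ ∂μ by
        rw [MeasureTheory.integral_indicator measurableSet_Ioc, hres]]
      refine integral_congr_ae ?_
      filter_upwards [haeI] with σ hσ
      by_cases hmem : σ ∈ Set.Ioc s t1
      · rw [Set.indicator_of_mem hmem, L11Aux.quad_triple]
        simp [hG2def, hζdef, hφdef, hτ.1, hmem.1]
      · rw [Set.indicator_of_notMem hmem]
        have hns : ¬ s < σ := fun hcon => hmem ⟨hcon, hσ.2⟩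
        simp [hG2def, hζdef, hns]
    calc (∫ τ in Set.Ioc t t1,
            w' t ⬝ᵥ ((∫ σ in Set.Ioc s t1, (B1 τ t)ᵀ * P2 τ σ * B1 σ s) *ᵥ w' s))
        = ∫ τ in Set.Ioc t t1, ∫ σ, G2 t s τ σ ∂μ := by
          refine integral_congr_ae ?_
          filter_upwards [ae_restrict_mem measurableSet_Ioc] with τ hτ
          exact hstep1 τ hτ
      _ = ∫ τ, (Set.Ioc t t1).indicator (fun τ => ∫ σ, G2 t s τ σ ∂μ) τ ∂μ := by
          rw [MeasureTheory.integral_indicator measurableSet_Ioc, hres']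
      _ = E2 t s := by
          rw [hE2def]
          refine integral_congr_ae ?_
          filter_upwards [haeI] with τ hτ
          by_cases hmem : τ ∈ Set.Ioc t t1
          · rw [Set.indicator_of_mem hmem]
          · rw [Set.indicator_of_notMem hmem]
            have hnt : ¬ t < τ := fun hcon => hmem ⟨hcon, hτ.2⟩
            have hz0 : ∀ σ, G2 t s τ σ = 0 := by
              intro σ; simp [hG2def, hζdef, hnt]
            simp [hz0]

  -- integrability of the four pieces over the product measure
  have iE0 : Integrable (fun q : ℝ × ℝ => E0 q.1 q.2) (μ.prod μ) := by
    refine intOfBd _ ?_ ((p : ℝ) * ((p : ℝ) * ‖P0‖) * ((m * CB) * (m * CB))) ?_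
    · refine (L11Aux.measurable_dot (a := fun q : ℝ × ℝ => φ t1 q.1)
        (b := fun q : ℝ × ℝ => P0 *ᵥ φ t1 q.2) ?_ ?_).aestronglyMeasurable
      · exact fun i => (hφm i).comp (measurable_const.prodMk measurable_fst)
      · exact fun i => L11Aux.measurable_mulVec (A := fun _ : ℝ × ℝ => P0)
          (b := fun q : ℝ × ℝ => φ t1 q.2) (fun i j => measurable_const)
          (fun j => (hφm j).comp (measurable_const.prodMk measurable_snd)) i
    · filter_upwards [haeI2] with q hq
      have h1 : |φ t1 q.1 ⬝ᵥ (P0 *ᵥ φ t1 q.2)|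
          ≤ (p : ℝ) * ((p : ℝ) * ‖P0‖) * (‖φ t1 q.1‖ * ‖φ t1 q.2‖) :=
        L11Aux.abs_quad_le _ _ _ (norm_nonneg _) fun i j => by
          rw [← Real.norm_eq_abs]
          exact (norm_le_pi_norm (P0 i) j).trans (norm_le_pi_norm P0 i)
      refine h1.trans ?_
      have h2 : ‖φ t1 q.1‖ * ‖φ t1 q.2‖ ≤ ((m * CB) * ‖w' q.1‖) * ((m * CB) * ‖w' q.2‖) :=
        mul_le_mul (hφbd t1 q.1 hq.1.1.le hq.1.2 le_rfl)
          (hφbd t1 q.2 hq.2.1.le hq.2.2 le_rfl) (norm_nonneg _) (by positivity)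
      calc (p : ℝ) * ((p : ℝ) * ‖P0‖) * (‖φ t1 q.1‖ * ‖φ t1 q.2‖)
          ≤ (p : ℝ) * ((p : ℝ) * ‖P0‖) * (((m * CB) * ‖w' q.1‖) * ((m * CB) * ‖w' q.2‖)) :=
            mul_le_mul_of_nonneg_left h2 (by positivity)
        _ = (p : ℝ) * ((p : ℝ) * ‖P0‖) * ((m * CB) * (m * CB)) * (‖w' q.1‖ * ‖w' q.2‖) := by
            ring
  have iE1 : Integrable (fun q : ℝ × ℝ => E1 q.1 q.2) (μ.prod μ) := by
    refine intOfBd _ ?_ (V * K1) ?_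
    · have hsm : StronglyMeasurable fun r : (ℝ × ℝ) × ℝ => G1 r.1.1 r.1.2 r.2 :=
        (mG1.comp ((measurable_fst.fst).prodMk
          ((measurable_fst.snd).prodMk measurable_snd))).stronglyMeasurable
      exact (hsm.integral_prod_right' (ν := μ)).aestronglyMeasurable
    · filter_upwards [haeI2] with q hq
      have hae : ∀ᵐ σ ∂μ, ‖G1 q.1 q.2 σ‖ ≤ K1 * (‖w' q.1‖ * ‖w' q.2‖) := by
        filter_upwards [haeI] with σ hσ
        rw [Real.norm_eq_abs]
        exact hG1bd q.1 q.2 σ hq.1.1.le hq.2.1.le hσ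
      calc |∫ σ, G1 q.1 q.2 σ ∂μ| ≤ ∫ _σ, K1 * (‖w' q.1‖ * ‖w' q.2‖) ∂μ :=
            MeasureTheory.norm_integral_le_of_norm_le (integrable_const _) hae
        _ = V * (K1 * (‖w' q.1‖ * ‖w' q.2‖)) := by
            rw [MeasureTheory.integral_const, smul_eq_mul, measureReal_def, ← hVdef]
        _ = V * K1 * (‖w' q.1‖ * ‖w' q.2‖) := by ring
  have iE2 : Integrable (fun q : ℝ × ℝ => E2 q.1 q.2) (μ.prod μ) := by
    refine intOfBd _ ?_ (V * (V * K2)) ?_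
    · have hsm1 : StronglyMeasurable fun r : ((ℝ × ℝ) × ℝ) × ℝ => G2 r.1.1.1 r.1.1.2 r.1.2 r.2 :=
        (mG2.comp ((measurable_fst.fst.fst).prodMk ((measurable_fst.fst.snd).prodMk
          ((measurable_fst.snd).prodMk measurable_snd)))).stronglyMeasurable
      have hsm2 := hsm1.integral_prod_right' (ν := μ)
      exact (hsm2.integral_prod_right' (ν := μ)).aestronglyMeasurable
    · filter_upwards [haeI2] with q hq
      have hae : ∀ᵐ τ ∂μ, ‖∫ σ, G2 q.1 q.2 τ σ ∂μ‖ ≤ V * (K2 * (‖w' q.1‖ * ‖w' q.2‖)) := by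
        filter_upwards [haeI] with τ hτ
        have hae2 : ∀ᵐ σ ∂μ, ‖G2 q.1 q.2 τ σ‖ ≤ K2 * (‖w' q.1‖ * ‖w' q.2‖) := by
          filter_upwards [haeI] with σ hσ
          rw [Real.norm_eq_abs]
          exact hG2bd q.1 q.2 τ σ hq.1.1.le hq.2.1.le hτ hσ
        calc ‖∫ σ, G2 q.1 q.2 τ σ ∂μ‖ ≤ ∫ _σ, K2 * (‖w' q.1‖ * ‖w' q.2‖) ∂μ :=
              MeasureTheory.norm_integral_le_of_norm_le (integrable_const _) hae2
          _ = V * (K2 * (‖w' q.1‖ * ‖w' q.2‖)) := by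
              rw [MeasureTheory.integral_const, smul_eq_mul, measureReal_def, ← hVdef]
      calc |∫ τ, ∫ σ, G2 q.1 q.2 τ σ ∂μ ∂μ| ≤ ∫ _τ, V * (K2 * (‖w' q.1‖ * ‖w' q.2‖)) ∂μ :=
            MeasureTheory.norm_integral_le_of_norm_le (integrable_const _) hae
        _ = V * (V * (K2 * (‖w' q.1‖ * ‖w' q.2‖))) := by
            rw [MeasureTheory.integral_const, smul_eq_mul, measureReal_def, ← hVdef]
        _ = V * (V * K2) * (‖w' q.1‖ * ‖w' q.2‖) := by ring
  have iE3 : Integrable (fun q : ℝ × ℝ => E3 q.1 q.2) (μ.prod μ) := by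
    refine intOfBd _ ?_ ((m : ℝ) * ((m : ℝ) * CQ)) ?_
    · refine (L11Aux.measurable_dot (a := fun q : ℝ × ℝ => w' q.1)
        (b := fun q : ℝ × ℝ => Q2 q.1 q.2 *ᵥ w' q.2) ?_ ?_).aestronglyMeasurable
      · exact fun i => (hw'c i).comp measurable_fst
      · exact fun i => L11Aux.measurable_mulVec (A := fun q : ℝ × ℝ => Q2 q.1 q.2)
          (b := fun q : ℝ × ℝ => w' q.2) hQ2meas (fun j => (hw'c j).comp measurable_snd) i
    · filter_upwards [haeI2] with q hq
      exact L11Aux.abs_quad_le _ _ _ hCQ (hQ2bd q.1 (hIsub hq.1) q.2 (hIsub hq.2))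
  -- nonnegativity of the P0 piece
  have hφt1int : Integrable (fun t => φ t1 t) μ := by
    refine (hwn.const_mul (m * CB)).mono' ?_ ?_
    · exact (measurable_pi_lambda _ fun i =>
        (hφm i).comp (measurable_const.prodMk measurable_id)).aestronglyMeasurable
    · filter_upwards [haeI] with t htI
      exact hφbd t1 t htI.1.le htI.2 le_rfl
  have N0 : 0 ≤ ∫ t, ∫ s, E0 t s ∂μ ∂μ := by
    have hinner : ∀ t, ∫ s, E0 t s ∂μ = φ t1 t ⬝ᵥ (P0 *ᵥ ∫ s, φ t1 s ∂μ) := by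
      intro t
      have hpt : ∀ s, E0 t s = Matrix.vecMul (φ t1 t) P0 ⬝ᵥ φ t1 s := by
        intro s
        simp only [hE0def]
        exact dotProduct_mulVec _ _ _
      simp_rw [hpt]
      rw [L11Aux.integral_dot _ hφt1int, ← dotProduct_mulVec]
    simp_rw [hinner]
    rw [L11Aux.integral_dot' _ hφt1int]
    exact hP0 _
  -- nonnegativity of the Q2 piece
  have N3 : 0 ≤ ∫ t, ∫ s, E3 t s ∂μ ∂μ := hQ2 w' hw'

  -- nonnegativity of the P1 piece
  have N1 : 0 ≤ ∫ t, ∫ s, E1 t s ∂μ ∂μ := by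
    have swap1 : ∀ t ∈ I, ∫ s, E1 t s ∂μ = ∫ σ, ∫ s, G1 t s σ ∂μ ∂μ := by
      intro t htI
      have hint : Integrable (Function.uncurry fun s σ => G1 t s σ) (μ.prod μ) := by
        refine intOfBd1 _ ?_ (K1 * ‖w' t‖) ?_
        · exact (mG1.comp (measurable_const.prodMk
            (measurable_fst.prodMk measurable_snd))).aestronglyMeasurable
        · filter_upwards [haeI2] with q hq
          calc |G1 t q.1 q.2| ≤ K1 * (‖w' t‖ * ‖w' q.1‖) :=
                hG1bd t q.1 q.2 htI.1.le hq.1.1.le hq.2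
            _ = K1 * ‖w' t‖ * ‖w' q.1‖ := by ring
      simpa [hE1def] using integral_integral_swap hint
    have hswap2int : Integrable (Function.uncurry fun t σ => ∫ s, G1 t s σ ∂μ) (μ.prod μ) := by
      refine intOfBd1 _ ?_ (K1 * Cw) ?_
      · have hsm : StronglyMeasurable fun r : (ℝ × ℝ) × ℝ => G1 r.1.1 r.2 r.1.2 :=
          (mG1.comp ((measurable_fst.fst).prodMk
            (measurable_snd.prodMk measurable_fst.snd))).stronglyMeasurable
        exact (hsm.integral_prod_right' (ν := μ)).aestronglyMeasurable
      · filter_upwards [haeI2] with q hq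
        have hae : ∀ᵐ s ∂μ, ‖G1 q.1 s q.2‖ ≤ (K1 * ‖w' q.1‖) * ‖w' s‖ := by
          filter_upwards [haeI] with s hs
          rw [Real.norm_eq_abs]
          calc |G1 q.1 s q.2| ≤ K1 * (‖w' q.1‖ * ‖w' s‖) :=
                hG1bd q.1 s q.2 hq.1.1.le hs.1.le hq.2
            _ = (K1 * ‖w' q.1‖) * ‖w' s‖ := by ring
        calc |∫ s, G1 q.1 s q.2 ∂μ| ≤ ∫ s, (K1 * ‖w' q.1‖) * ‖w' s‖ ∂μ :=
              MeasureTheory.norm_integral_le_of_norm_le (hwn.const_mul _) hae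
          _ = K1 * ‖w' q.1‖ * Cw := by rw [MeasureTheory.integral_const_mul, ← hCwdef]
          _ = K1 * Cw * ‖w' q.1‖ := by ring
    have main1 : ∫ t, ∫ s, E1 t s ∂μ ∂μ = ∫ σ, z σ ⬝ᵥ (P1 σ *ᵥ z σ) ∂μ := by
      calc ∫ t, ∫ s, E1 t s ∂μ ∂μ
          = ∫ t, ∫ σ, ∫ s, G1 t s σ ∂μ ∂μ ∂μ := by
            refine integral_congr_ae ?_
            filter_upwards [haeI] with t htI
            exact swap1 t htI
        _ = ∫ σ, ∫ t, ∫ s, G1 t s σ ∂μ ∂μ ∂μ := integral_integral_swap hswap2int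
        _ = ∫ σ, z σ ⬝ᵥ (P1 σ *ᵥ z σ) ∂μ := by
            refine integral_congr_ae ?_
            filter_upwards [haeI] with σ hσ
            have hin : ∀ t, ∫ s, G1 t s σ ∂μ = ζ σ t ⬝ᵥ (P1 σ *ᵥ z σ) := by
              intro t
              have hpt : ∀ s, G1 t s σ = Matrix.vecMul (ζ σ t) (P1 σ) ⬝ᵥ ζ σ s := by
                intro s
                simp only [hG1def]
                exact dotProduct_mulVec _ _ _
              simp_rw [hpt]
              rw [L11Aux.integral_dot _ (hζi σ hσ.2), ← dotProduct_mulVec]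
            simp_rw [hin]
            exact L11Aux.integral_dot' _ (hζi σ hσ.2)
    rw [main1]
    refine integral_nonneg_of_ae ?_
    filter_upwards [hP1] with σ hσ
    exact hσ.2 (z σ)
  -- nonnegativity of the P2 piece
  have N2 : 0 ≤ ∫ t, ∫ s, E2 t s ∂μ ∂μ := by
    set Y : ℝ → Fin p → ℝ := fun τ => ∫ σ, P2 τ σ *ᵥ z σ ∂μ with hYdef
    have hYint : ∀ τ, τ ∈ Set.Icc t0 t1 → Integrable (fun σ => P2 τ σ *ᵥ z σ) μ := by
      intro τ hτ
      refine L11Aux.integrable_of_bdd ?_ (C := (p : ℝ) * C2 * Cz) ?_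
      · exact (measurable_pi_lambda _ fun i =>
          L11Aux.measurable_mulVec (A := fun σ => P2 τ σ) (b := z)
            (fun i j => (hP2meas i j).comp (measurable_const.prodMk measurable_id))
            hzc i).aestronglyMeasurable
      · filter_upwards [haeI] with σ hσ
        calc ‖P2 τ σ *ᵥ z σ‖ ≤ (p : ℝ) * C2 * ‖z σ‖ :=
              L11Aux.norm_mulVec_le _ _ hC2 (hP2bd τ hτ σ (hIsub hσ))
          _ ≤ (p : ℝ) * C2 * Cz :=
              mul_le_mul_of_nonneg_left (hzbd σ hσ.2)
                (mul_nonneg (Nat.cast_nonneg p) hC2)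
    have hYsm : StronglyMeasurable Y := by
      rw [hYdef]
      exact ((measurable_pi_lambda _ fun i =>
        L11Aux.measurable_mulVec (A := fun q : ℝ × ℝ => P2 q.1 q.2) (b := fun q => z q.2)
          hP2meas (fun j => (hzc j).comp measurable_snd) i).stronglyMeasurable
          ).integral_prod_right'
    have hYc : ∀ i, Measurable fun τ => Y τ i :=
      fun i => (measurable_pi_apply i).comp hYsm.measurable
    have hYbd : ∀ τ, τ ∈ Set.Icc t0 t1 → ‖Y τ‖ ≤ V * ((p : ℝ) * C2 * Cz) := by
      intro τ hτ
      rw [hYdef]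
      refine (MeasureTheory.norm_integral_le_of_norm_le (integrable_const ((p : ℝ) * C2 * Cz)) ?_).trans ?_
      · filter_upwards [haeI] with σ hσ
        calc ‖P2 τ σ *ᵥ z σ‖ ≤ (p : ℝ) * C2 * ‖z σ‖ :=
              L11Aux.norm_mulVec_le _ _ hC2 (hP2bd τ hτ σ (hIsub hσ))
          _ ≤ (p : ℝ) * C2 * Cz :=
              mul_le_mul_of_nonneg_left (hzbd σ hσ.2)
                (mul_nonneg (Nat.cast_nonneg p) hC2)
      · rw [MeasureTheory.integral_const, smul_eq_mul, measureReal_def, ← hVdef]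
    have swapA : ∀ t ∈ I, ∫ s, E2 t s ∂μ = ∫ τ, ∫ s, ∫ σ, G2 t s τ σ ∂μ ∂μ ∂μ := by
      intro t htI
      have hint : Integrable (Function.uncurry fun s τ => ∫ σ, G2 t s τ σ ∂μ) (μ.prod μ) := by
        refine intOfBd1 _ ?_ (K2 * V * ‖w' t‖) ?_
        · have hsm : StronglyMeasurable fun r : (ℝ × ℝ) × ℝ => G2 t r.1.1 r.1.2 r.2 :=
            (mG2.comp (measurable_const.prodMk ((measurable_fst.fst).prodMk
              ((measurable_fst.snd).prodMk measurable_snd)))).stronglyMeasurable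
          exact (hsm.integral_prod_right' (ν := μ)).aestronglyMeasurable
        · filter_upwards [haeI2] with q hq
          have hae : ∀ᵐ σ ∂μ, ‖G2 t q.1 q.2 σ‖ ≤ K2 * (‖w' t‖ * ‖w' q.1‖) := by
            filter_upwards [haeI] with σ hσ
            rw [Real.norm_eq_abs]
            exact hG2bd t q.1 q.2 σ htI.1.le hq.1.1.le hq.2 hσ
          calc |∫ σ, G2 t q.1 q.2 σ ∂μ| ≤ ∫ _σ, K2 * (‖w' t‖ * ‖w' q.1‖) ∂μ :=
                MeasureTheory.norm_integral_le_of_norm_le (integrable_const _) hae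
            _ = V * (K2 * (‖w' t‖ * ‖w' q.1‖)) := by
                rw [MeasureTheory.integral_const, smul_eq_mul, measureReal_def, ← hVdef]
            _ = K2 * V * ‖w' t‖ * ‖w' q.1‖ := by ring
      simpa [hE2def] using integral_integral_swap hint
    have swapB : ∀ t ∈ I, ∀ τ ∈ I,
        ∫ s, ∫ σ, G2 t s τ σ ∂μ ∂μ = ∫ σ, ∫ s, G2 t s τ σ ∂μ ∂μ := by
      intro t htI τ hτI
      refine integral_integral_swap ?_
      refine intOfBd1 _ ?_ (K2 * ‖w' t‖) ?_
      · exact (mG2.comp (measurable_const.prodMk (measurable_fst.prodMk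
          (measurable_const.prodMk measurable_snd)))).aestronglyMeasurable
      · filter_upwards [haeI2] with q hq
        calc |G2 t q.1 τ q.2| ≤ K2 * (‖w' t‖ * ‖w' q.1‖) :=
              hG2bd t q.1 τ q.2 htI.1.le hq.1.1.le hτI hq.2
          _ = K2 * ‖w' t‖ * ‖w' q.1‖ := by ring
    have hinnerS : ∀ t τ, ∀ σ ∈ I, ∫ s, G2 t s τ σ ∂μ = ζ τ t ⬝ᵥ (P2 τ σ *ᵥ z σ) := by
      intro t τ σ hσ
      have hpt : ∀ s, G2 t s τ σ = Matrix.vecMul (ζ τ t) (P2 τ σ) ⬝ᵥ ζ σ s := by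
        intro s
        simp only [hG2def]
        exact dotProduct_mulVec _ _ _
      simp_rw [hpt]
      rw [L11Aux.integral_dot _ (hζi σ hσ.2), ← dotProduct_mulVec]
    have hstepστ : ∀ t, ∀ τ ∈ I, ∫ σ, ∫ s, G2 t s τ σ ∂μ ∂μ = ζ τ t ⬝ᵥ Y τ := by
      intro t τ hτI
      calc ∫ σ, ∫ s, G2 t s τ σ ∂μ ∂μ = ∫ σ, ζ τ t ⬝ᵥ (P2 τ σ *ᵥ z σ) ∂μ := by
            refine integral_congr_ae ?_
            filter_upwards [haeI] with σ hσ
            exact hinnerS t τ σ hσ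
        _ = ζ τ t ⬝ᵥ Y τ := by
            rw [L11Aux.integral_dot _ (hYint τ (hIsub hτI))]
    have swapC : ∫ t, ∫ τ, ζ τ t ⬝ᵥ Y τ ∂μ ∂μ = ∫ τ, ∫ t, ζ τ t ⬝ᵥ Y τ ∂μ ∂μ := by
      refine integral_integral_swap ?_
      refine intOfBd1 _ ?_ ((p : ℝ) * ((m * CB) * (V * ((p : ℝ) * C2 * Cz)))) ?_
      · refine (L11Aux.measurable_dot (a := fun q : ℝ × ℝ => ζ q.2 q.1)
          (b := fun q : ℝ × ℝ => Y q.2) ?_ ?_).aestronglyMeasurable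
        · exact fun i => (hζm i).comp (measurable_snd.prodMk measurable_fst)
        · exact fun i => (hYc i).comp measurable_snd
      · filter_upwards [haeI2] with q hq
        calc |ζ q.2 q.1 ⬝ᵥ Y q.2| ≤ (p : ℝ) * (‖ζ q.2 q.1‖ * ‖Y q.2‖) := L11Aux.abs_dot_le _ _
          _ ≤ (p : ℝ) * (((m * CB) * ‖w' q.1‖) * (V * ((p : ℝ) * C2 * Cz))) := by
              refine mul_le_mul_of_nonneg_left ?_ (Nat.cast_nonneg p)
              refine mul_le_mul (hζbd q.2 q.1 hq.2.2 hq.1.1.le) (hYbd q.2 (hIsub hq.2))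
                (norm_nonneg _) ?_
              positivity
          _ = (p : ℝ) * ((m * CB) * (V * ((p : ℝ) * C2 * Cz))) * ‖w' q.1‖ := by ring
    have main2 : ∫ t, ∫ s, E2 t s ∂μ ∂μ = ∫ τ, ∫ σ, z τ ⬝ᵥ (P2 τ σ *ᵥ z σ) ∂μ ∂μ := by
      calc ∫ t, ∫ s, E2 t s ∂μ ∂μ
          = ∫ t, ∫ τ, ζ τ t ⬝ᵥ Y τ ∂μ ∂μ := by
            refine integral_congr_ae ?_
            filter_upwards [haeI] with t htI
            rw [swapA t htI]
            refine integral_congr_ae ?_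
            filter_upwards [haeI] with τ hτI
            rw [swapB t htI τ hτI, hstepστ t τ hτI]
        _ = ∫ τ, ∫ t, ζ τ t ⬝ᵥ Y τ ∂μ ∂μ := swapC
        _ = ∫ τ, ∫ σ, z τ ⬝ᵥ (P2 τ σ *ᵥ z σ) ∂μ ∂μ := by
            refine integral_congr_ae ?_
            filter_upwards [haeI] with τ hτI
            rw [L11Aux.integral_dot' _ (hζi τ hτI.2)]
            exact (L11Aux.integral_dot _ (hYint τ (hIsub hτI))).symm
    rw [main2]
    exact hP2 z hz2
  -- replace `w` by its measurable representative in the goal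
  have hw2w' : (∫ t, ∫ s, w t ⬝ᵥ (((B1 t1 t)ᵀ * P0 * B1 t1 s
        + (∫ σ in (max t s)..t1, (B1 σ t)ᵀ * P1 σ * B1 σ s)
        + (∫ τ in t..t1, ∫ σ in s..t1, (B1 τ t)ᵀ * P2 τ σ * B1 σ s)
        + Q2 t s) *ᵥ w s) ∂μ ∂μ)
      = ∫ t, ∫ s, w' t ⬝ᵥ (((B1 t1 t)ᵀ * P0 * B1 t1 s
        + (∫ σ in (max t s)..t1, (B1 σ t)ᵀ * P1 σ * B1 σ s)
        + (∫ τ in t..t1, ∫ σ in s..t1, (B1 τ t)ᵀ * P2 τ σ * B1 σ s)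
        + Q2 t s) *ᵥ w' s) ∂μ ∂μ := by
    refine integral_congr_ae ?_
    filter_upwards [hww'] with t htw
    refine integral_congr_ae ?_
    filter_upwards [hww'] with s hsw
    rw [htw, hsw]
  have hgoal : ∫ t, ∫ s, w' t ⬝ᵥ (((B1 t1 t)ᵀ * P0 * B1 t1 s
        + (∫ σ in (max t s)..t1, (B1 σ t)ᵀ * P1 σ * B1 σ s)
        + (∫ τ in t..t1, ∫ σ in s..t1, (B1 τ t)ᵀ * P2 τ σ * B1 σ s)
        + Q2 t s) *ᵥ w' s) ∂μ ∂μ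
      = ∫ t, ∫ s, (E0 t s + E1 t s + E2 t s + E3 t s) ∂μ ∂μ := by
    refine integral_congr_ae ?_
    filter_upwards [haeI] with t htI
    refine integral_congr_ae ?_
    filter_upwards [haeI] with s hsI
    rw [Matrix.add_mulVec, Matrix.add_mulVec, Matrix.add_mulVec, dotProduct_add,
      dotProduct_add, dotProduct_add]
    rw [R0 t s, R1 t htI s hsI, R2 t htI s hsI]
  have hsum : Integrable
      (fun q : ℝ × ℝ => E0 q.1 q.2 + E1 q.1 q.2 + E2 q.1 q.2 + E3 q.1 q.2) (μ.prod μ) :=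
    ((iE0.add iE1).add iE2).add iE3
  have hsplit : ∫ t, ∫ s, (E0 t s + E1 t s + E2 t s + E3 t s) ∂μ ∂μ
      = (∫ t, ∫ s, E0 t s ∂μ ∂μ) + (∫ t, ∫ s, E1 t s ∂μ ∂μ)
        + (∫ t, ∫ s, E2 t s ∂μ ∂μ) + (∫ t, ∫ s, E3 t s ∂μ ∂μ) := by
    have step1 : ∫ t, ∫ s, (E0 t s + E1 t s + E2 t s + E3 t s) ∂μ ∂μ
        = (∫ t, ∫ s, (E0 t s + E1 t s + E2 t s) ∂μ ∂μ) + ∫ t, ∫ s, E3 t s ∂μ ∂μ := by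
      exact integral_integral_add (by exact (iE0.add iE1).add iE2) iE3
    have step2 : ∫ t, ∫ s, (E0 t s + E1 t s + E2 t s) ∂μ ∂μ
        = (∫ t, ∫ s, (E0 t s + E1 t s) ∂μ ∂μ) + ∫ t, ∫ s, E2 t s ∂μ ∂μ := by
      exact integral_integral_add (by exact iE0.add iE1) iE2
    have step3 : ∫ t, ∫ s, (E0 t s + E1 t s) ∂μ ∂μ
        = (∫ t, ∫ s, E0 t s ∂μ ∂μ) + ∫ t, ∫ s, E1 t s ∂μ ∂μ := by
      exact integral_integral_add iE0 iE1
    rw [step1, step2, step3]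
  rw [hw2w', hgoal, hsplit]
  exact add_nonneg (add_nonneg (add_nonneg N0 N1) N2) N3
end

section
/- The kernel L₂₂(t,s) := C₁(t₁,t)ᵀP₀C₁(t₁,s) + ∫_{max(t,s)}^{t₁} C₁(σ,t)ᵀP₁(σ)C₁(σ,s) dσ + ∫_t^{t₁}∫_s^{t₁} C₁(τ,t)ᵀP₂(τ,σ)C₁(σ,s) dσ dτ + R₂(t,s) satisfies ∫_{t₀}^{t₁}∫_{t₀}^{t₁} w(t)ᵀL₂₂(t,s)w(s) ds dt ≤ 0 for every w ∈ L²(t₀,t₁;ℝⁿ). -/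
open MeasureTheory Matrix intervalIntegral

attribute [local instance] Matrix.normedAddCommGroup Matrix.normedSpace

local instance matrixMeasurableSpace {a b : ℕ} : MeasurableSpace (Matrix (Fin a) (Fin b) ℝ) :=
  inferInstanceAs (MeasurableSpace ((Fin a) → (Fin b) → ℝ))

local instance matrixBorelSpace {a b : ℕ} : BorelSpace (Matrix (Fin a) (Fin b) ℝ) :=
  inferInstanceAs (BorelSpace ((Fin a) → (Fin b) → ℝ))

local instance matrixENormedAddMonoid {a b : ℕ} : ENormedAddMonoid (Matrix (Fin a) (Fin b) ℝ) :=
  NormedAddCommGroup.toENormedAddCommMonoid.toENormedAddMonoid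

local instance matrixPMS {a b : ℕ} :
    TopologicalSpace.PseudoMetrizableSpace (Matrix (Fin a) (Fin b) ℝ) :=
  inferInstanceAs (TopologicalSpace.PseudoMetrizableSpace ((Fin a) → (Fin b) → ℝ))

local instance matrixSCT {a b : ℕ} : SecondCountableTopology (Matrix (Fin a) (Fin b) ℝ) :=
  inferInstanceAs (SecondCountableTopology ((Fin a) → (Fin b) → ℝ))

section Aux

noncomputable def dotL {b : ℕ} (d : Fin b → ℝ) : (Fin b → ℝ) →L[ℝ] ℝ :=
  LinearMap.toContinuousLinearMap
    { toFun := fun v => v ⬝ᵥ d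
      map_add' := fun x y => add_dotProduct x y d
      map_smul' := fun c x => by simp [smul_dotProduct] }

@[simp] lemma dotL_apply {b : ℕ} (d v : Fin b → ℝ) : dotL d v = v ⬝ᵥ d := rfl

noncomputable def dotMulL {a b : ℕ} (c : Fin a → ℝ) (M : Matrix (Fin a) (Fin b) ℝ) :
    (Fin b → ℝ) →L[ℝ] ℝ :=
  LinearMap.toContinuousLinearMap
    { toFun := fun v => c ⬝ᵥ (M *ᵥ v)
      map_add' := fun x y => by simp [Matrix.mulVec_add, dotProduct_add]
      map_smul' := fun r x => by simp [Matrix.mulVec_smul] }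

@[simp] lemma dotMulL_apply {a b : ℕ} (c : Fin a → ℝ) (M : Matrix (Fin a) (Fin b) ℝ)
    (v : Fin b → ℝ) : dotMulL c M v = c ⬝ᵥ (M *ᵥ v) := rfl

noncomputable def quadL {a b : ℕ} (c : Fin a → ℝ) (d : Fin b → ℝ) :
    Matrix (Fin a) (Fin b) ℝ →L[ℝ] ℝ :=
  LinearMap.toContinuousLinearMap
    { toFun := fun M => c ⬝ᵥ (M *ᵥ d)
      map_add' := fun M N => by simp [Matrix.add_mulVec, dotProduct_add]
      map_smul' := fun r M => by simp [Matrix.smul_mulVec] }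

@[simp] lemma quadL_apply {a b : ℕ} (c : Fin a → ℝ) (d : Fin b → ℝ)
    (M : Matrix (Fin a) (Fin b) ℝ) : quadL c d M = c ⬝ᵥ (M *ᵥ d) := rfl

lemma quad_triple {a b : ℕ} (A : Matrix (Fin a) (Fin b) ℝ) (P : Matrix (Fin a) (Fin a) ℝ)
    (B : Matrix (Fin a) (Fin b) ℝ) (c d : Fin b → ℝ) :
    c ⬝ᵥ ((Aᵀ * P * B) *ᵥ d) = (A *ᵥ c) ⬝ᵥ (P *ᵥ (B *ᵥ d)) := by
  rw [← Matrix.mulVec_mulVec, ← Matrix.mulVec_mulVec, Matrix.dotProduct_mulVec c Aᵀ,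
    Matrix.vecMul_transpose]

lemma abs_dot_mulVec_le {a b : ℕ} {P : Matrix (Fin a) (Fin b) ℝ} {MP : ℝ}
    (hP : ∀ i j, |P i j| ≤ MP) (hMP : 0 ≤ MP) (c : Fin a → ℝ) (d : Fin b → ℝ) :
    |c ⬝ᵥ (P *ᵥ d)| ≤ a * b * MP * ‖c‖ * ‖d‖ := by
  have h1 : c ⬝ᵥ (P *ᵥ d) = ∑ i, ∑ j, c i * (P i j * d j) := by
    simp [dotProduct, Matrix.mulVec, Finset.mul_sum]
  rw [h1]
  have h2 : ∀ (i : Fin a) (j : Fin b), |c i * (P i j * d j)| ≤ ‖c‖ * (MP * ‖d‖) := by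
    intro i j
    rw [abs_mul, abs_mul]
    have hci : |c i| ≤ ‖c‖ := by
      simpa [Real.norm_eq_abs] using norm_le_pi_norm c i
    have hdj : |d j| ≤ ‖d‖ := by
      simpa [Real.norm_eq_abs] using norm_le_pi_norm d j
    exact mul_le_mul hci (mul_le_mul (hP i j) hdj (abs_nonneg _) hMP)
      (by positivity) (norm_nonneg _)
  calc |∑ i, ∑ j, c i * (P i j * d j)| ≤ ∑ i, ∑ j, |c i * (P i j * d j)| := by
        refine (Finset.abs_sum_le_sum_abs _ _).trans ?_
        exact Finset.sum_le_sum fun i _ => Finset.abs_sum_le_sum_abs _ _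
    _ ≤ ∑ _i : Fin a, ∑ _j : Fin b, ‖c‖ * (MP * ‖d‖) :=
        Finset.sum_le_sum fun i _ => Finset.sum_le_sum fun j _ => h2 i j
    _ = a * b * MP * ‖c‖ * ‖d‖ := by
        simp [Finset.sum_const]
        ring

lemma abs_dot_mulVec_le' {a b : ℕ} {P : Matrix (Fin a) (Fin b) ℝ} {MP : ℝ}
    (hP : ∀ i j, |P i j| ≤ MP) (hMP : 0 ≤ MP) {c : Fin a → ℝ} {d : Fin b → ℝ}
    {Cc Cd : ℝ} (hc : ‖c‖ ≤ Cc) (hd : ‖d‖ ≤ Cd) :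
    |c ⬝ᵥ (P *ᵥ d)| ≤ a * b * MP * Cc * Cd := by
  refine (abs_dot_mulVec_le hP hMP c d).trans ?_
  have h1 : (0:ℝ) ≤ a * b * MP := by positivity
  have hc0 : (0:ℝ) ≤ Cc := (norm_nonneg c).trans hc
  calc (a:ℝ) * b * MP * ‖c‖ * ‖d‖ ≤ a * b * MP * Cc * ‖d‖ := by
        have := mul_le_mul_of_nonneg_left hc h1
        exact mul_le_mul_of_nonneg_right (by nlinarith) (norm_nonneg d)
    _ ≤ a * b * MP * Cc * Cd := mul_le_mul_of_nonneg_left hd (by positivity)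

lemma norm_mulVec_le {a b : ℕ} {A : Matrix (Fin a) (Fin b) ℝ} {MA : ℝ}
    (hA : ∀ i j, |A i j| ≤ MA) (hMA : 0 ≤ MA) (d : Fin b → ℝ) :
    ‖A *ᵥ d‖ ≤ b * MA * ‖d‖ := by
  rw [pi_norm_le_iff_of_nonneg (by positivity)]
  intro i
  have h : (A *ᵥ d) i = ∑ j, A i j * d j := rfl
  rw [Real.norm_eq_abs, h]
  calc |∑ j, A i j * d j| ≤ ∑ j, |A i j * d j| := Finset.abs_sum_le_sum_abs _ _
    _ ≤ ∑ _j : Fin b, MA * ‖d‖ := by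
        refine Finset.sum_le_sum fun j _ => ?_
        rw [abs_mul]
        exact mul_le_mul (hA i j)
          (by simpa [Real.norm_eq_abs] using norm_le_pi_norm d j) (abs_nonneg _) hMA
    _ = b * MA * ‖d‖ := by simp [Finset.sum_const]; ring

lemma abs_entry_triple_le {pa pb na nb : ℕ}
    {A : Matrix (Fin pa) (Fin na) ℝ} {P : Matrix (Fin pa) (Fin pb) ℝ}
    {B : Matrix (Fin pb) (Fin nb) ℝ} {MA MP MB : ℝ}
    (hA : ∀ i j, |A i j| ≤ MA) (hP : ∀ i j, |P i j| ≤ MP) (hB : ∀ i j, |B i j| ≤ MB)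
    (hMA : 0 ≤ MA) (hMP : 0 ≤ MP) (_hMB : 0 ≤ MB)
    (i : Fin na) (j : Fin nb) :
    |(Aᵀ * P * B) i j| ≤ pa * pb * (MA * MP * MB) := by
  have h1 : (Aᵀ * P * B) i j = ∑ k, ∑ l, A l i * P l k * B k j := by
    simp [Matrix.mul_apply, Finset.sum_mul, Matrix.transpose_apply]
  rw [h1]
  calc |∑ k, ∑ l, A l i * P l k * B k j| ≤ ∑ k, ∑ l, |A l i * P l k * B k j| := by
        refine (Finset.abs_sum_le_sum_abs _ _).trans ?_
        exact Finset.sum_le_sum fun k _ => Finset.abs_sum_le_sum_abs _ _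
    _ ≤ ∑ _k : Fin pb, ∑ _l : Fin pa, MA * MP * MB := by
        refine Finset.sum_le_sum fun k _ => Finset.sum_le_sum fun l _ => ?_
        rw [abs_mul, abs_mul]
        exact mul_le_mul (mul_le_mul (hA l i) (hP l k) (abs_nonneg _) hMA)
          (hB k j) (abs_nonneg _) (by positivity)
    _ = pa * pb * (MA * MP * MB) := by simp [Finset.sum_const]; ring

lemma norm_triple_le {pa pb na nb : ℕ}
    {A : Matrix (Fin pa) (Fin na) ℝ} {P : Matrix (Fin pa) (Fin pb) ℝ}
    {B : Matrix (Fin pb) (Fin nb) ℝ} {MA MP MB : ℝ}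
    (hA : ∀ i j, |A i j| ≤ MA) (hP : ∀ i j, |P i j| ≤ MP) (hB : ∀ i j, |B i j| ≤ MB)
    (hMA : 0 ≤ MA) (hMP : 0 ≤ MP) (hMB : 0 ≤ MB) :
    ‖Aᵀ * P * B‖ ≤ pa * pb * (MA * MP * MB) := by
  rw [Matrix.norm_le_iff (by positivity)]
  intro i j
  rw [Real.norm_eq_abs]
  exact abs_entry_triple_le hA hP hB hMA hMP hMB i j

lemma measurable_dot_mulVec {α : Type*} [MeasurableSpace α] {a b : ℕ}
    {f : α → Fin a → ℝ} {P : α → Matrix (Fin a) (Fin b) ℝ} {g : α → Fin b → ℝ}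
    (hf : Measurable f) (hP : ∀ i j, Measurable fun x => P x i j) (hg : Measurable g) :
    Measurable fun x => f x ⬝ᵥ (P x *ᵥ g x) := by
  simp only [dotProduct, Matrix.mulVec]
  apply Finset.measurable_sum
  intro i _
  apply Measurable.mul ((measurable_pi_apply i).comp hf)
  apply Finset.measurable_sum
  intro j _
  exact (hP i j).mul ((measurable_pi_apply j).comp hg)

lemma measurable_tripleProd {α : Type*} [MeasurableSpace α] {pa pb na nb : ℕ}
    {A : α → Matrix (Fin pa) (Fin na) ℝ} {P : α → Matrix (Fin pa) (Fin pb) ℝ}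
    {B : α → Matrix (Fin pb) (Fin nb) ℝ}
    (hA : ∀ i j, Measurable fun x => A x i j) (hP : ∀ i j, Measurable fun x => P x i j)
    (hB : ∀ i j, Measurable fun x => B x i j) :
    Measurable fun x => (A x)ᵀ * P x * B x := by
  apply measurable_pi_lambda
  intro i
  apply measurable_pi_lambda
  intro j
  have h : (fun x => ((A x)ᵀ * P x * B x) i j)
      = fun x => ∑ k, ∑ l, A x l i * P x l k * B x k j := by
    funext x
    simp [Matrix.mul_apply, Finset.sum_mul, Matrix.transpose_apply]
  rw [h]
  apply Finset.measurable_sum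
  intro k _
  apply Finset.measurable_sum
  intro l _
  exact ((hA l i).mul (hP l k)).mul (hB k j)

lemma integrable_comp_fst {α β : Type*} [MeasurableSpace α] [MeasurableSpace β]
    {μ : Measure α} {ν : Measure β} [SFinite ν]
    [IsFiniteMeasure ν] {f : α → ℝ} (hf : Integrable f μ) :
    Integrable (fun q : α × β => f q.1) (μ.prod ν) := by
  simpa using hf.mul_prod (integrable_const (1:ℝ))

end Aux
set_option maxHeartbeats 2000000 in
theorem L22_aux
    (p n : ℕ) (t0 t1 : ℝ) (ht : t0 < t1)
    (C1 : ℝ → ℝ → Matrix (Fin p) (Fin n) ℝ)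
    (P0 : Matrix (Fin p) (Fin p) ℝ)
    (P1 : ℝ → Matrix (Fin p) (Fin p) ℝ)
    (P2 : ℝ → ℝ → Matrix (Fin p) (Fin p) ℝ)
    (R2 : ℝ → ℝ → Matrix (Fin n) (Fin n) ℝ)
    (hC1meas : ∀ i j, Measurable fun q : ℝ × ℝ => C1 q.1 q.2 i j)
    (hC1bdd : ∃ M, ∀ t s, t0 ≤ s → s ≤ t → t ≤ t1 → ∀ i j, |C1 t s i j| ≤ M)
    (hP0 : ∀ z : Fin p → ℝ, z ⬝ᵥ (P0 *ᵥ z) ≤ 0)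
    (hP1meas : ∀ i j, Measurable fun t => P1 t i j)
    (hP1bdd : ∃ M, ∀ t ∈ Set.Icc t0 t1, ∀ i j, |P1 t i j| ≤ M)
    (hP1 : ∀ᵐ t ∂(volume.restrict (Set.Ioc t0 t1)),
      (P1 t)ᵀ = P1 t ∧ ∀ z : Fin p → ℝ, z ⬝ᵥ (P1 t *ᵥ z) ≤ 0)
    (hP2meas : ∀ i j, Measurable fun q : ℝ × ℝ => P2 q.1 q.2 i j)
    (hP2bdd : ∃ M, ∀ t ∈ Set.Icc t0 t1, ∀ s ∈ Set.Icc t0 t1, ∀ i j, |P2 t s i j| ≤ M)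
    (hP2 : ∀ z : ℝ → Fin p → ℝ, MemLp z 2 (volume.restrict (Set.Ioc t0 t1)) →
      (∫ t in Set.Ioc t0 t1, ∫ s in Set.Ioc t0 t1, z t ⬝ᵥ (P2 t s *ᵥ z s)) ≤ 0)
    (hR2meas : ∀ i j, Measurable fun q : ℝ × ℝ => R2 q.1 q.2 i j)
    (hR2bdd : ∃ M, ∀ t ∈ Set.Icc t0 t1, ∀ s ∈ Set.Icc t0 t1, ∀ i j, |R2 t s i j| ≤ M)
    (hR2 : ∀ w : ℝ → Fin n → ℝ, MemLp w 2 (volume.restrict (Set.Ioc t0 t1)) →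
      (∫ t in Set.Ioc t0 t1, ∫ s in Set.Ioc t0 t1, w t ⬝ᵥ (R2 t s *ᵥ w s)) ≤ 0) :
    ∀ w : ℝ → Fin n → ℝ, Measurable w → MemLp w 2 (volume.restrict (Set.Ioc t0 t1)) →
      (∫ t in Set.Ioc t0 t1, ∫ s in Set.Ioc t0 t1,
        w t ⬝ᵥ (((C1 t1 t)ᵀ * P0 * C1 t1 s
          + (∫ σ in (max t s)..t1, (C1 σ t)ᵀ * P1 σ * C1 σ s)
          + (∫ τ in t..t1, ∫ σ in s..t1, (C1 τ t)ᵀ * P2 τ σ * C1 σ s)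
          + R2 t s) *ᵥ w s)) ≤ 0 := by
  intro w hwm hw
  set S : Set ℝ := Set.Ioc t0 t1 with hSd
  set μ : Measure ℝ := volume.restrict S with hμd
  haveI hfin : IsFiniteMeasure μ := by
    constructor
    rw [hμd, Measure.restrict_apply_univ, hSd, Real.volume_Ioc]
    exact ENNReal.ofReal_lt_top
  have hae : ∀ᵐ x ∂μ, x ∈ S := by rw [hμd]; exact ae_restrict_mem measurableSet_Ioc
  have haeI : ∀ᵐ x ∂μ, x ∈ Set.Ioo t0 t1 := by
    have h1 : ∀ᵐ x ∂μ, x ≠ t1 := by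
      rw [hμd]
      refine ae_restrict_of_ae ?_
      rw [ae_iff]
      have h2 : {x : ℝ | ¬ x ≠ t1} = {t1} := by ext x; simp
      rw [h2]
      exact measure_singleton t1
    filter_upwards [hae, h1] with x hx hne
    exact ⟨hx.1, lt_of_le_of_ne hx.2 hne⟩
  -- constants
  obtain ⟨MC', hC'⟩ := hC1bdd
  obtain ⟨M1', h1'⟩ := hP1bdd
  obtain ⟨M2', h2'⟩ := hP2bdd
  obtain ⟨M3', h3'⟩ := hR2bdd
  set MC := max MC' 0 with hMCd
  set MP1 := max M1' 0 with hMP1d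
  set MP2 := max M2' 0 with hMP2d
  set MR2 := max M3' 0 with hMR2d
  have hMC0 : (0:ℝ) ≤ MC := le_max_right _ _
  have hMP10 : (0:ℝ) ≤ MP1 := le_max_right _ _
  have hMP20 : (0:ℝ) ≤ MP2 := le_max_right _ _
  have hMR20 : (0:ℝ) ≤ MR2 := le_max_right _ _
  have hC : ∀ t s, t0 ≤ s → s ≤ t → t ≤ t1 → ∀ i j, |C1 t s i j| ≤ MC :=
    fun t s a b c i j => (hC' t s a b c i j).trans (le_max_left _ _)
  have hP1b : ∀ σ ∈ Set.Icc t0 t1, ∀ i j, |P1 σ i j| ≤ MP1 :=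
    fun σ hσ i j => (h1' σ hσ i j).trans (le_max_left _ _)
  have hP2bb : ∀ τ ∈ Set.Icc t0 t1, ∀ σ ∈ Set.Icc t0 t1, ∀ i j, |P2 τ σ i j| ≤ MP2 :=
    fun τ hτ σ hσ i j => (h2' τ hτ σ hσ i j).trans (le_max_left _ _)
  have hR2b : ∀ τ ∈ Set.Icc t0 t1, ∀ σ ∈ Set.Icc t0 t1, ∀ i j, |R2 τ σ i j| ≤ MR2 :=
    fun τ hτ σ hσ i j => (h3' τ hτ σ hσ i j).trans (le_max_left _ _)
  set MP0 := ‖P0‖ with hMP0d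
  have hMP00 : (0:ℝ) ≤ MP0 := norm_nonneg _
  have hP0b : ∀ i j, |P0 i j| ≤ MP0 := fun i j => by
    rw [← Real.norm_eq_abs]
    exact Matrix.norm_entry_le_entrywise_sup_norm P0
  have hIocIcc : S ⊆ Set.Icc t0 t1 := by rw [hSd]; exact Set.Ioc_subset_Icc_self
  -- w facts
  have hwint : Integrable w μ := hw.integrable one_le_two
  have hwn : Integrable (fun x => ‖w x‖) μ := hwint.norm
  set Cw := ∫ x, ‖w x‖ ∂μ with hCwd
  have hCw0 : 0 ≤ Cw := integral_nonneg fun x => norm_nonneg _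
  set cu := (n : ℝ) * MC with hcud
  have hcu0 : 0 ≤ cu := mul_nonneg (Nat.cast_nonneg n) hMC0
  -- the auxiliary kernel u
  set u : ℝ → ℝ → Fin p → ℝ :=
    fun σ x => if t0 ≤ x ∧ x < σ ∧ σ ≤ t1 then C1 σ x *ᵥ w x else 0 with hud
  have hu_pos : ∀ {σ x : ℝ}, t0 ≤ x → x < σ → σ ≤ t1 → u σ x = C1 σ x *ᵥ w x := by
    intro σ x a b c; simp only [hud]; rw [if_pos ⟨a, b, c⟩]
  have hu_neg : ∀ {σ x : ℝ}, ¬(t0 ≤ x ∧ x < σ ∧ σ ≤ t1) → u σ x = 0 := by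
    intro σ x h; simp only [hud]; rw [if_neg h]
  have huS : ∀ σ x, u σ x ≠ 0 → σ ∈ S ∧ t0 ≤ x ∧ x < σ := by
    intro σ x h
    by_cases hc : t0 ≤ x ∧ x < σ ∧ σ ≤ t1
    · refine ⟨?_, hc.1, hc.2.1⟩
      rw [hSd]
      exact ⟨lt_of_le_of_lt hc.1 hc.2.1, hc.2.2⟩
    · exact absurd (hu_neg hc) h
  have hub : ∀ σ x, ‖u σ x‖ ≤ cu * ‖w x‖ := by
    intro σ x
    by_cases hc : t0 ≤ x ∧ x < σ ∧ σ ≤ t1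
    · rw [hu_pos hc.1 hc.2.1 hc.2.2, hcud]
      exact norm_mulVec_le (hC σ x hc.1 hc.2.1.le hc.2.2) hMC0 (w x)
    · rw [hu_neg hc, norm_zero]
      exact mul_nonneg hcu0 (norm_nonneg _)
  have humeas : Measurable (Function.uncurry u) := by
    apply measurable_pi_lambda
    intro i
    have hrw : (fun q : ℝ × ℝ => Function.uncurry u q i)
        = fun q : ℝ × ℝ => if t0 ≤ q.2 ∧ q.2 < q.1 ∧ q.1 ≤ t1
            then (C1 q.1 q.2 *ᵥ w q.2) i else 0 := by
      funext q
      simp only [Function.uncurry, hud]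
      by_cases hc : t0 ≤ q.2 ∧ q.2 < q.1 ∧ q.1 ≤ t1 <;> simp [hc]
    rw [hrw]
    have hset : MeasurableSet {q : ℝ × ℝ | t0 ≤ q.2 ∧ q.2 < q.1 ∧ q.1 ≤ t1} := by
      refine MeasurableSet.inter ?_ (MeasurableSet.inter ?_ ?_)
      · exact measurableSet_le measurable_const measurable_snd
      · exact measurableSet_lt measurable_snd measurable_fst
      · exact measurableSet_le measurable_fst measurable_const
    refine Measurable.ite hset ?_ measurable_const
    have h2 : (fun q : ℝ × ℝ => (C1 q.1 q.2 *ᵥ w q.2) i)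
        = fun q : ℝ × ℝ => ∑ j, C1 q.1 q.2 i j * w q.2 j := rfl
    rw [h2]
    apply Finset.measurable_sum
    intro j _
    exact (hC1meas i j).mul ((measurable_pi_apply j).comp (hwm.comp measurable_snd))
  have humeas1 : ∀ σ, Measurable (u σ) := fun σ => humeas.comp measurable_prodMk_left
  have hu_int : ∀ σ, Integrable (u σ) μ := by
    intro σ
    exact Integrable.mono' (hwn.const_mul cu) (humeas1 σ).aestronglyMeasurable
      (ae_of_all _ fun x => hub σ x)
  -- z
  set z : ℝ → Fin p → ℝ := fun σ => ∫ x, u σ x ∂μ with hzd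
  have hzsm : StronglyMeasurable z := humeas.stronglyMeasurable.integral_prod_right'
  have hzm : Measurable z := hzsm.measurable
  set Cz := cu * Cw with hCzd
  have hCz0 : 0 ≤ Cz := mul_nonneg hcu0 hCw0
  have hzb : ∀ σ, ‖z σ‖ ≤ Cz := by
    intro σ
    simp only [hzd]
    calc ‖∫ x, u σ x ∂μ‖ ≤ ∫ x, ‖u σ x‖ ∂μ := norm_integral_le_integral_norm _
      _ ≤ ∫ x, cu * ‖w x‖ ∂μ :=
          integral_mono_of_nonneg (ae_of_all _ fun x => norm_nonneg _)
            (hwn.const_mul cu) (ae_of_all _ fun x => hub σ x)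
      _ = Cz := by rw [MeasureTheory.integral_const_mul, hCzd, hCwd]
  have hzmem : MemLp z 2 μ := MemLp.of_bound hzsm.aestronglyMeasurable Cz (ae_of_all _ hzb)
  have hz0 : ∀ σ, σ ∉ S → z σ = 0 := by
    intro σ hσ
    have h0 : ∀ x, u σ x = 0 := by
      intro x
      by_contra h
      exact hσ (huS σ x h).1
    simp only [hzd, h0, MeasureTheory.integral_zero]
  -- constants for quadratic bounds
  set D0 := (p:ℝ) * p * MP0 * cu * cu with hD0d
  set D1 := (p:ℝ) * p * MP1 * cu * cu with hD1d
  set D2 := (p:ℝ) * p * MP2 * cu * cu with hD2d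
  set D3 := (n:ℝ) * n * MR2 with hD3d
  set E1 := (p:ℝ) * p * MP1 * cu * Cz with hE1d
  set E2 := (p:ℝ) * p * MP2 * cu * Cz with hE2d
  set E3 := (p:ℝ) * p * MP2 * Cz * Cz with hE3d
  have hD00 : 0 ≤ D0 := by
    rw [hD0d]; exact mul_nonneg (mul_nonneg (mul_nonneg (by positivity) hMP00) hcu0) hcu0
  have hD10 : 0 ≤ D1 := by
    rw [hD1d]; exact mul_nonneg (mul_nonneg (mul_nonneg (by positivity) hMP10) hcu0) hcu0
  have hD20 : 0 ≤ D2 := by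
    rw [hD2d]; exact mul_nonneg (mul_nonneg (mul_nonneg (by positivity) hMP20) hcu0) hcu0
  have hD30 : 0 ≤ D3 := by rw [hD3d]; exact mul_nonneg (by positivity) hMR20
  -- pointwise bounds
  have hg1b : ∀ σ t s, |u σ t ⬝ᵥ (P1 σ *ᵥ u σ s)| ≤ D1 * (‖w t‖ * ‖w s‖) := by
    intro σ t s
    have hrhs : 0 ≤ D1 * (‖w t‖ * ‖w s‖) := mul_nonneg hD10 (by positivity)
    rcases eq_or_ne (u σ t) 0 with h | h
    · rw [h]; simpa [zero_dotProduct] using hrhs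
    · have hσS : σ ∈ S := (huS σ t h).1
      calc |u σ t ⬝ᵥ (P1 σ *ᵥ u σ s)| ≤ (p:ℝ) * p * MP1 * (cu * ‖w t‖) * (cu * ‖w s‖) :=
            abs_dot_mulVec_le' (hP1b σ (hIocIcc hσS)) hMP10 (hub σ t) (hub σ s)
        _ = D1 * (‖w t‖ * ‖w s‖) := by rw [hD1d]; ring
  have hg2b : ∀ τ σ t s, |u τ t ⬝ᵥ (P2 τ σ *ᵥ u σ s)| ≤ D2 * (‖w t‖ * ‖w s‖) := by
    intro τ σ t s
    have hrhs : 0 ≤ D2 * (‖w t‖ * ‖w s‖) := mul_nonneg hD20 (by positivity)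
    rcases eq_or_ne (u τ t) 0 with h | h
    · rw [h]; simpa [zero_dotProduct] using hrhs
    rcases eq_or_ne (u σ s) 0 with h2 | h2
    · rw [h2]; simpa [Matrix.mulVec_zero, dotProduct_zero] using hrhs
    have hτS : τ ∈ S := (huS τ t h).1
    have hσS : σ ∈ S := (huS σ s h2).1
    calc |u τ t ⬝ᵥ (P2 τ σ *ᵥ u σ s)| ≤ (p:ℝ) * p * MP2 * (cu * ‖w t‖) * (cu * ‖w s‖) :=
          abs_dot_mulVec_le' (hP2bb τ (hIocIcc hτS) σ (hIocIcc hσS)) hMP20 (hub τ t) (hub σ s)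
      _ = D2 * (‖w t‖ * ‖w s‖) := by rw [hD2d]; ring
  have hh1b : ∀ σ x, |u σ x ⬝ᵥ (P1 σ *ᵥ z σ)| ≤ E1 * ‖w x‖ := by
    intro σ x
    have hE10 : 0 ≤ E1 := by
      rw [hE1d]; exact mul_nonneg (mul_nonneg (mul_nonneg (by positivity) hMP10) hcu0) hCz0
    have hrhs : 0 ≤ E1 * ‖w x‖ := mul_nonneg hE10 (norm_nonneg _)
    rcases eq_or_ne (u σ x) 0 with h | h
    · rw [h]; simpa [zero_dotProduct] using hrhs
    · have hσS : σ ∈ S := (huS σ x h).1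
      calc |u σ x ⬝ᵥ (P1 σ *ᵥ z σ)| ≤ (p:ℝ) * p * MP1 * (cu * ‖w x‖) * Cz :=
            abs_dot_mulVec_le' (hP1b σ (hIocIcc hσS)) hMP10 (hub σ x) (hzb σ)
        _ = E1 * ‖w x‖ := by rw [hE1d]; ring
  have hh2b : ∀ τ σ x, |u τ x ⬝ᵥ (P2 τ σ *ᵥ z σ)| ≤ E2 * ‖w x‖ := by
    intro τ σ x
    have hE20 : 0 ≤ E2 := by
      rw [hE2d]; exact mul_nonneg (mul_nonneg (mul_nonneg (by positivity) hMP20) hcu0) hCz0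
    have hrhs : 0 ≤ E2 * ‖w x‖ := mul_nonneg hE20 (norm_nonneg _)
    rcases eq_or_ne (u τ x) 0 with h | h
    · rw [h]; simpa [zero_dotProduct] using hrhs
    rcases eq_or_ne (z σ) 0 with h2 | h2
    · rw [h2]; simpa [Matrix.mulVec_zero, dotProduct_zero] using hrhs
    have hτS : τ ∈ S := (huS τ x h).1
    have hσS : σ ∈ S := by
      by_contra hc
      exact h2 (hz0 σ hc)
    calc |u τ x ⬝ᵥ (P2 τ σ *ᵥ z σ)| ≤ (p:ℝ) * p * MP2 * (cu * ‖w x‖) * Cz :=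
          abs_dot_mulVec_le' (hP2bb τ (hIocIcc hτS) σ (hIocIcc hσS)) hMP20 (hub τ x) (hzb σ)
      _ = E2 * ‖w x‖ := by rw [hE2d]; ring
  have hzz2b : ∀ τ σ, |z τ ⬝ᵥ (P2 τ σ *ᵥ z σ)| ≤ E3 := by
    intro τ σ
    have hE30 : 0 ≤ E3 := by
      rw [hE3d]; exact mul_nonneg (mul_nonneg (mul_nonneg (by positivity) hMP20) hCz0) hCz0
    rcases eq_or_ne (z τ) 0 with h | h
    · rw [h]; simpa [zero_dotProduct] using hE30
    rcases eq_or_ne (z σ) 0 with h2 | h2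
    · rw [h2]; simpa [Matrix.mulVec_zero, dotProduct_zero] using hE30
    have hτS : τ ∈ S := by by_contra hc; exact h (hz0 τ hc)
    have hσS : σ ∈ S := by by_contra hc; exact h2 (hz0 σ hc)
    calc |z τ ⬝ᵥ (P2 τ σ *ᵥ z σ)| ≤ (p:ℝ) * p * MP2 * Cz * Cz :=
          abs_dot_mulVec_le' (hP2bb τ (hIocIcc hτS) σ (hIocIcc hσS)) hMP20 (hzb τ) (hzb σ)
      _ = E3 := by rw [hE3d]
  -- the four nice kernels
  set F0 : ℝ → ℝ → ℝ := fun t s => u t1 t ⬝ᵥ (P0 *ᵥ u t1 s) with hF0d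
  set F1 : ℝ → ℝ → ℝ := fun t s => ∫ σ, u σ t ⬝ᵥ (P1 σ *ᵥ u σ s) ∂μ with hF1d
  set F2 : ℝ → ℝ → ℝ :=
    fun t s => ∫ r : ℝ × ℝ, u r.1 t ⬝ᵥ (P2 r.1 r.2 *ᵥ u r.2 s) ∂(μ.prod μ) with hF2d
  set F3 : ℝ → ℝ → ℝ := fun t s => w t ⬝ᵥ (R2 t s *ᵥ w s) with hF3d
  set V := (μ Set.univ).toReal with hVd
  set V2 := ((μ.prod μ) Set.univ).toReal with hV2d
  -- measurability of the kernels
  have hF0m : Measurable (fun q : ℝ × ℝ => F0 q.1 q.2) := by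
    simp only [hF0d]
    exact measurable_dot_mulVec ((humeas1 t1).comp measurable_fst)
      (fun i j => measurable_const) ((humeas1 t1).comp measurable_snd)
  have hF1m : StronglyMeasurable (fun q : ℝ × ℝ => F1 q.1 q.2) := by
    have hG1m : Measurable (fun r : (ℝ × ℝ) × ℝ => u r.2 r.1.1 ⬝ᵥ (P1 r.2 *ᵥ u r.2 r.1.2)) :=
      measurable_dot_mulVec
        (humeas.comp (measurable_snd.prodMk (measurable_fst.comp measurable_fst)))
        (fun i j => (hP1meas i j).comp measurable_snd)
        (humeas.comp (measurable_snd.prodMk (measurable_snd.comp measurable_fst)))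
    have h := hG1m.stronglyMeasurable.integral_prod_right' (ν := μ)
    simp only [hF1d]
    exact h
  have hF2m : StronglyMeasurable (fun q : ℝ × ℝ => F2 q.1 q.2) := by
    have hG2m : Measurable (fun r : (ℝ × ℝ) × (ℝ × ℝ) =>
        u r.2.1 r.1.1 ⬝ᵥ (P2 r.2.1 r.2.2 *ᵥ u r.2.2 r.1.2)) :=
      measurable_dot_mulVec
        (humeas.comp ((measurable_fst.comp measurable_snd).prodMk
          (measurable_fst.comp measurable_fst)))
        (fun i j => (hP2meas i j).comp measurable_snd)
        (humeas.comp ((measurable_snd.comp measurable_snd).prodMk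
          (measurable_snd.comp measurable_fst)))
    have h := hG2m.stronglyMeasurable.integral_prod_right' (ν := μ.prod μ)
    simp only [hF2d]
    exact h
  have hF3m : Measurable (fun q : ℝ × ℝ => F3 q.1 q.2) := by
    simp only [hF3d]
    exact measurable_dot_mulVec (hwm.comp measurable_fst) hR2meas (hwm.comp measurable_snd)
  -- bounds on the kernels
  have hF0b : ∀ t s, |F0 t s| ≤ D0 * (‖w t‖ * ‖w s‖) := by
    intro t s
    simp only [hF0d]
    calc |u t1 t ⬝ᵥ (P0 *ᵥ u t1 s)| ≤ (p:ℝ) * p * MP0 * (cu * ‖w t‖) * (cu * ‖w s‖) :=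
          abs_dot_mulVec_le' hP0b hMP00 (hub t1 t) (hub t1 s)
      _ = D0 * (‖w t‖ * ‖w s‖) := by rw [hD0d]; ring
  have hF1b : ∀ t s, |F1 t s| ≤ (V * D1) * (‖w t‖ * ‖w s‖) := by
    intro t s
    simp only [hF1d]
    calc |∫ σ, u σ t ⬝ᵥ (P1 σ *ᵥ u σ s) ∂μ| ≤ ∫ σ, ‖u σ t ⬝ᵥ (P1 σ *ᵥ u σ s)‖ ∂μ := by
          rw [← Real.norm_eq_abs]
          exact norm_integral_le_integral_norm _
      _ ≤ ∫ _σ, D1 * (‖w t‖ * ‖w s‖) ∂μ :=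
          integral_mono_of_nonneg (ae_of_all _ fun σ => norm_nonneg _) (integrable_const _)
            (ae_of_all _ fun σ => by simpa using hg1b σ t s)
      _ = V * (D1 * (‖w t‖ * ‖w s‖)) := by
          rw [MeasureTheory.integral_const, smul_eq_mul, hVd]; rfl
      _ = (V * D1) * (‖w t‖ * ‖w s‖) := by ring
  have hF2b : ∀ t s, |F2 t s| ≤ (V2 * D2) * (‖w t‖ * ‖w s‖) := by
    intro t s
    simp only [hF2d]
    calc |∫ r : ℝ × ℝ, u r.1 t ⬝ᵥ (P2 r.1 r.2 *ᵥ u r.2 s) ∂(μ.prod μ)|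
        ≤ ∫ r : ℝ × ℝ, ‖u r.1 t ⬝ᵥ (P2 r.1 r.2 *ᵥ u r.2 s)‖ ∂(μ.prod μ) := by
          rw [← Real.norm_eq_abs]
          exact norm_integral_le_integral_norm _
      _ ≤ ∫ _r : ℝ × ℝ, D2 * (‖w t‖ * ‖w s‖) ∂(μ.prod μ) :=
          integral_mono_of_nonneg (ae_of_all _ fun r => norm_nonneg _) (integrable_const _)
            (ae_of_all _ fun r => by simpa using hg2b r.1 r.2 t s)
      _ = V2 * (D2 * (‖w t‖ * ‖w s‖)) := by
          rw [MeasureTheory.integral_const, smul_eq_mul, hV2d]; rfl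
      _ = (V2 * D2) * (‖w t‖ * ‖w s‖) := by ring
  have hF3b : ∀ t ∈ S, ∀ s ∈ S, |F3 t s| ≤ D3 * (‖w t‖ * ‖w s‖) := by
    intro t htS s hsS
    simp only [hF3d]
    calc |w t ⬝ᵥ (R2 t s *ᵥ w s)| ≤ (n:ℝ) * n * MR2 * ‖w t‖ * ‖w s‖ :=
          abs_dot_mulVec_le' (hR2b t (hIocIcc htS) s (hIocIcc hsS)) hMR20 le_rfl le_rfl
      _ = D3 * (‖w t‖ * ‖w s‖) := by rw [hD3d]; ring
  -- slice integrability
  have hInt0 : ∀ t, Integrable (F0 t) μ := by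
    intro t
    refine Integrable.mono' (hwn.const_mul (D0 * ‖w t‖))
      (hF0m.comp measurable_prodMk_left).aestronglyMeasurable (ae_of_all _ fun s => ?_)
    rw [Real.norm_eq_abs]
    calc |F0 t s| ≤ D0 * (‖w t‖ * ‖w s‖) := hF0b t s
      _ = D0 * ‖w t‖ * ‖w s‖ := by ring
  have hInt1 : ∀ t, Integrable (F1 t) μ := by
    intro t
    refine Integrable.mono' (hwn.const_mul ((V * D1) * ‖w t‖))
      ((hF1m.comp_measurable measurable_prodMk_left).aestronglyMeasurable)
      (ae_of_all _ fun s => ?_)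
    rw [Real.norm_eq_abs]
    calc |F1 t s| ≤ (V * D1) * (‖w t‖ * ‖w s‖) := hF1b t s
      _ = (V * D1) * ‖w t‖ * ‖w s‖ := by ring
  have hInt2 : ∀ t, Integrable (F2 t) μ := by
    intro t
    refine Integrable.mono' (hwn.const_mul ((V2 * D2) * ‖w t‖))
      ((hF2m.comp_measurable measurable_prodMk_left).aestronglyMeasurable)
      (ae_of_all _ fun s => ?_)
    rw [Real.norm_eq_abs]
    calc |F2 t s| ≤ (V2 * D2) * (‖w t‖ * ‖w s‖) := hF2b t s
      _ = (V2 * D2) * ‖w t‖ * ‖w s‖ := by ring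
  have hInt3 : ∀ t ∈ S, Integrable (F3 t) μ := by
    intro t htS
    refine Integrable.mono' (hwn.const_mul (D3 * ‖w t‖))
      (hF3m.comp measurable_prodMk_left).aestronglyMeasurable ?_
    filter_upwards [hae] with s hsS
    rw [Real.norm_eq_abs]
    calc |F3 t s| ≤ D3 * (‖w t‖ * ‖w s‖) := hF3b t htS s hsS
      _ = D3 * ‖w t‖ * ‖w s‖ := by ring
  -- integrability of the inner integrals
  have hG0 : Integrable (fun t => ∫ s, F0 t s ∂μ) μ := by
    refine Integrable.mono' (hwn.const_mul (D0 * Cw))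
      (hF0m.stronglyMeasurable.integral_prod_right').aestronglyMeasurable
      (ae_of_all _ fun t => ?_)
    rw [Real.norm_eq_abs]
    calc |∫ s, F0 t s ∂μ| ≤ ∫ s, ‖F0 t s‖ ∂μ := by
          rw [← Real.norm_eq_abs]; exact norm_integral_le_integral_norm _
      _ ≤ ∫ s, (D0 * ‖w t‖) * ‖w s‖ ∂μ :=
          integral_mono_of_nonneg (ae_of_all _ fun s => norm_nonneg _) (hwn.const_mul _)
            (ae_of_all _ fun s => by
              simpa using (hF0b t s).trans_eq (by ring))
      _ = (D0 * ‖w t‖) * Cw := by rw [MeasureTheory.integral_const_mul, hCwd]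
      _ = D0 * Cw * ‖w t‖ := by ring
  have hG1 : Integrable (fun t => ∫ s, F1 t s ∂μ) μ := by
    refine Integrable.mono' (hwn.const_mul ((V * D1) * Cw))
      (hF1m.integral_prod_right').aestronglyMeasurable (ae_of_all _ fun t => ?_)
    rw [Real.norm_eq_abs]
    calc |∫ s, F1 t s ∂μ| ≤ ∫ s, ‖F1 t s‖ ∂μ := by
          rw [← Real.norm_eq_abs]; exact norm_integral_le_integral_norm _
      _ ≤ ∫ s, ((V * D1) * ‖w t‖) * ‖w s‖ ∂μ :=
          integral_mono_of_nonneg (ae_of_all _ fun s => norm_nonneg _) (hwn.const_mul _)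
            (ae_of_all _ fun s => by
              simpa using (hF1b t s).trans_eq (by ring))
      _ = ((V * D1) * ‖w t‖) * Cw := by rw [MeasureTheory.integral_const_mul, hCwd]
      _ = (V * D1) * Cw * ‖w t‖ := by ring
  have hG2 : Integrable (fun t => ∫ s, F2 t s ∂μ) μ := by
    refine Integrable.mono' (hwn.const_mul ((V2 * D2) * Cw))
      (hF2m.integral_prod_right').aestronglyMeasurable (ae_of_all _ fun t => ?_)
    rw [Real.norm_eq_abs]
    calc |∫ s, F2 t s ∂μ| ≤ ∫ s, ‖F2 t s‖ ∂μ := by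
          rw [← Real.norm_eq_abs]; exact norm_integral_le_integral_norm _
      _ ≤ ∫ s, ((V2 * D2) * ‖w t‖) * ‖w s‖ ∂μ :=
          integral_mono_of_nonneg (ae_of_all _ fun s => norm_nonneg _) (hwn.const_mul _)
            (ae_of_all _ fun s => by
              simpa using (hF2b t s).trans_eq (by ring))
      _ = ((V2 * D2) * ‖w t‖) * Cw := by rw [MeasureTheory.integral_const_mul, hCwd]
      _ = (V2 * D2) * Cw * ‖w t‖ := by ring
  have hG3 : Integrable (fun t => ∫ s, F3 t s ∂μ) μ := by
    refine Integrable.mono' (hwn.const_mul (D3 * Cw))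
      (hF3m.stronglyMeasurable.integral_prod_right').aestronglyMeasurable ?_
    filter_upwards [hae] with t htS
    rw [Real.norm_eq_abs]
    calc |∫ s, F3 t s ∂μ| ≤ ∫ s, ‖F3 t s‖ ∂μ := by
          rw [← Real.norm_eq_abs]; exact norm_integral_le_integral_norm _
      _ ≤ ∫ s, (D3 * ‖w t‖) * ‖w s‖ ∂μ := by
          refine integral_mono_of_nonneg (ae_of_all _ fun s => norm_nonneg _)
            (hwn.const_mul _) ?_
          filter_upwards [hae] with s hsS
          simpa using (hF3b t htS s hsS).trans_eq (by ring)
      _ = (D3 * ‖w t‖) * Cw := by rw [MeasureTheory.integral_const_mul, hCwd]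
      _ = D3 * Cw * ‖w t‖ := by ring
  -- key equality 0
  have key0 : ∀ t ∈ Set.Ioo t0 t1, ∀ s ∈ Set.Ioo t0 t1,
      w t ⬝ᵥ (((C1 t1 t)ᵀ * P0 * C1 t1 s) *ᵥ w s) = F0 t s := by
    intro t htI s hsI
    simp only [hF0d]
    rw [quad_triple, hu_pos htI.1.le htI.2 le_rfl, hu_pos hsI.1.le hsI.2 le_rfl]
  -- key equality 1
  have key1 : ∀ t ∈ Set.Ioo t0 t1, ∀ s ∈ Set.Ioo t0 t1,
      w t ⬝ᵥ ((∫ σ in (max t s)..t1, (C1 σ t)ᵀ * P1 σ * C1 σ s) *ᵥ w s) = F1 t s := by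
    intro t htI s hsI
    have hts1 : max t s ≤ t1 := max_le htI.2.le hsI.2.le
    have ht0m : t0 < max t s := lt_of_lt_of_le htI.1 (le_max_left t s)
    have hsub : Set.Ioc (max t s) t1 ⊆ S := by
      rw [hSd]; exact Set.Ioc_subset_Ioc_left ht0m.le
    have hNm : Measurable fun σ => (C1 σ t)ᵀ * P1 σ * C1 σ s :=
      measurable_tripleProd
        (fun i j => (hC1meas i j).comp (measurable_id.prodMk measurable_const))
        hP1meas
        (fun i j => (hC1meas i j).comp (measurable_id.prodMk measurable_const))
    have hNbd : ∀ᵐ σ ∂(volume.restrict (Set.Ioc (max t s) t1)),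
        ‖(C1 σ t)ᵀ * P1 σ * C1 σ s‖ ≤ (p:ℝ) * p * (MC * MP1 * MC) := by
      filter_upwards [ae_restrict_mem measurableSet_Ioc] with σ hσ
      have htσ : t < σ := lt_of_le_of_lt (le_max_left t s) hσ.1
      have hsσ : s < σ := lt_of_le_of_lt (le_max_right t s) hσ.1
      exact norm_triple_le (hC σ t htI.1.le htσ.le hσ.2)
        (hP1b σ ⟨(htI.1.trans htσ).le, hσ.2⟩)
        (hC σ s hsI.1.le hsσ.le hσ.2) hMC0 hMP10 hMC0
    have hII : IntervalIntegrable (fun σ => (C1 σ t)ᵀ * P1 σ * C1 σ s)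
        volume (max t s) t1 := by
      rw [intervalIntegrable_iff_integrableOn_Ioc_of_le hts1]
      refine Measure.integrableOn_of_bounded ?_ hNm.aestronglyMeasurable hNbd
      rw [Real.volume_Ioc]
      exact ENNReal.ofReal_lt_top.ne
    have e1 := (quadL (w t) (w s)).intervalIntegral_comp_comm hII
    change (∫ σ in (max t s)..t1, w t ⬝ᵥ (((C1 σ t)ᵀ * P1 σ * C1 σ s) *ᵥ w s))
      = w t ⬝ᵥ ((∫ σ in (max t s)..t1, (C1 σ t)ᵀ * P1 σ * C1 σ s) *ᵥ w s) at e1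
    rw [← e1, intervalIntegral.integral_of_le hts1]
    have e2 : (∫ σ in Set.Ioc (max t s) t1,
          w t ⬝ᵥ (((C1 σ t)ᵀ * P1 σ * C1 σ s) *ᵥ w s))
        = ∫ σ, (Set.Ioc (max t s) t1).indicator
            (fun σ => w t ⬝ᵥ (((C1 σ t)ᵀ * P1 σ * C1 σ s) *ᵥ w s)) σ ∂μ := by
      rw [hμd, setIntegral_indicator measurableSet_Ioc,
        Set.inter_eq_self_of_subset_right hsub]
    rw [e2]
    simp only [hF1d]
    refine MeasureTheory.integral_congr_ae ?_
    filter_upwards [hae] with σ hσS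
    by_cases hA : σ ∈ Set.Ioc (max t s) t1
    · rw [Set.indicator_of_mem hA, quad_triple,
        hu_pos htI.1.le (lt_of_le_of_lt (le_max_left t s) hA.1) hA.2,
        hu_pos hsI.1.le (lt_of_le_of_lt (le_max_right t s) hA.1) hA.2]
    · rw [Set.indicator_of_notMem hA]
      have hσ1 : σ ≤ t1 := hσS.2
      have hle : σ ≤ max t s := not_lt.1 fun hc => hA ⟨hc, hσ1⟩
      rcases le_max_iff.1 hle with h2 | h2
      · rw [hu_neg (fun hc => absurd hc.2.1 (not_lt.2 h2))]
        simp
      · rw [hu_neg (fun hc => absurd hc.2.1 (not_lt.2 h2))]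
        simp
  -- key equality 2
  have key2 : ∀ t ∈ Set.Ioo t0 t1, ∀ s ∈ Set.Ioo t0 t1,
      w t ⬝ᵥ ((∫ τ in t..t1, ∫ σ in s..t1, (C1 τ t)ᵀ * P2 τ σ * C1 σ s) *ᵥ w s)
        = F2 t s := by
    intro t htI s hsI
    set N : ℝ → ℝ → Matrix (Fin n) (Fin n) ℝ :=
      fun τ σ => (C1 τ t)ᵀ * P2 τ σ * C1 σ s with hNd
    set Q : ℝ → ℝ → Matrix (Fin n) (Fin n) ℝ :=
      fun τ => (Set.Ioc s t1).indicator (N τ) with hQd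
    have hsubs : Set.Ioc s t1 ⊆ S := by rw [hSd]; exact Set.Ioc_subset_Ioc_left hsI.1.le
    have hsubt : Set.Ioc t t1 ⊆ S := by rw [hSd]; exact Set.Ioc_subset_Ioc_left htI.1.le
    have hNm : Measurable (fun q : ℝ × ℝ => N q.1 q.2) := by
      simp only [hNd]
      exact measurable_tripleProd
        (fun i j => (hC1meas i j).comp (measurable_fst.prodMk measurable_const))
        hP2meas
        (fun i j => (hC1meas i j).comp (measurable_snd.prodMk measurable_const))
    have hQm : Measurable (fun q : ℝ × ℝ => Q q.1 q.2) := by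
      have hrw : (fun q : ℝ × ℝ => Q q.1 q.2)
          = fun q : ℝ × ℝ => if q.2 ∈ Set.Ioc s t1 then N q.1 q.2 else 0 := by
        funext q
        simp only [hQd, Set.indicator_apply]
      rw [hrw]
      exact Measurable.ite (measurable_snd measurableSet_Ioc) hNm measurable_const
    have hNbd : ∀ τ ∈ Set.Ioc t t1, ∀ σ ∈ Set.Ioc s t1,
        ‖N τ σ‖ ≤ (p:ℝ) * p * (MC * MP2 * MC) := by
      intro τ hτ σ hσ
      simp only [hNd]
      exact norm_triple_le (hC τ t htI.1.le hτ.1.le hτ.2)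
        (hP2bb τ ⟨(htI.1.trans hτ.1).le, hτ.2⟩ σ ⟨(hsI.1.trans hσ.1).le, hσ.2⟩)
        (hC σ s hsI.1.le hσ.1.le hσ.2) hMC0 hMP20 hMC0
    have hQb : ∀ τ ∈ Set.Ioc t t1, ∀ σ, ‖Q τ σ‖ ≤ (p:ℝ) * p * (MC * MP2 * MC) := by
      intro τ hτ σ
      by_cases hσ : σ ∈ Set.Ioc s t1
      · simp only [hQd]
        rw [Set.indicator_of_mem hσ]
        exact hNbd τ hτ σ hσ
      · simp only [hQd]
        rw [Set.indicator_of_notMem hσ, norm_zero]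
        have : (0:ℝ) ≤ MC * MP2 * MC := mul_nonneg (mul_nonneg hMC0 hMP20) hMC0
        positivity
    have hIone : ∀ τ ∈ Set.Ioc t t1, Integrable (Q τ) μ := by
      intro τ hτ
      exact Integrable.mono' (integrable_const ((p:ℝ) * p * (MC * MP2 * MC)))
        (hQm.comp measurable_prodMk_left).aestronglyMeasurable
        (ae_of_all _ fun σ => hQb τ hτ σ)
    have hinner : ∀ τ, (∫ σ in s..t1, N τ σ) = ∫ σ, Q τ σ ∂μ := by
      intro τ
      rw [intervalIntegral.integral_of_le hsI.2.le]
      simp only [hQd]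
      rw [hμd, setIntegral_indicator measurableSet_Ioc,
        Set.inter_eq_self_of_subset_right hsubs]
    have hQsm : StronglyMeasurable (fun τ => ∫ σ, Q τ σ ∂μ) :=
      hQm.stronglyMeasurable.integral_prod_right'
    have hQIb : ∀ τ ∈ Set.Ioc t t1,
        ‖∫ σ, Q τ σ ∂μ‖ ≤ V * ((p:ℝ) * p * (MC * MP2 * MC)) := by
      intro τ hτ
      calc ‖∫ σ, Q τ σ ∂μ‖ ≤ ∫ σ, ‖Q τ σ‖ ∂μ := norm_integral_le_integral_norm _
        _ ≤ ∫ _σ, (p:ℝ) * p * (MC * MP2 * MC) ∂μ :=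
            integral_mono_of_nonneg (ae_of_all _ fun σ => norm_nonneg _)
              (integrable_const _) (ae_of_all _ fun σ => hQb τ hτ σ)
        _ = V * ((p:ℝ) * p * (MC * MP2 * MC)) := by
            rw [MeasureTheory.integral_const, smul_eq_mul, hVd]; rfl
    have hII2 : IntervalIntegrable (fun τ => ∫ σ, Q τ σ ∂μ) volume t t1 := by
      rw [intervalIntegrable_iff_integrableOn_Ioc_of_le htI.2.le]
      refine Measure.integrableOn_of_bounded (M := V * ((p:ℝ) * p * (MC * MP2 * MC))) ?_ hQsm.aestronglyMeasurable ?_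
      · rw [Real.volume_Ioc]
        exact ENNReal.ofReal_lt_top.ne
      · filter_upwards [ae_restrict_mem measurableSet_Ioc] with τ hτ
        exact hQIb τ hτ
    have e0 : (∫ τ in t..t1, ∫ σ in s..t1, N τ σ) = ∫ τ in t..t1, ∫ σ, Q τ σ ∂μ :=
      intervalIntegral.integral_congr fun τ _ => hinner τ
    have e1 := (quadL (w t) (w s)).intervalIntegral_comp_comm hII2
    change (∫ τ in t..t1, w t ⬝ᵥ ((∫ σ, Q τ σ ∂μ) *ᵥ w s))
      = w t ⬝ᵥ ((∫ τ in t..t1, ∫ σ, Q τ σ ∂μ) *ᵥ w s) at e1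
    rw [e0, ← e1, intervalIntegral.integral_of_le htI.2.le]
    have e2 : (∫ τ in Set.Ioc t t1, w t ⬝ᵥ ((∫ σ, Q τ σ ∂μ) *ᵥ w s))
        = ∫ τ, (Set.Ioc t t1).indicator
            (fun τ => w t ⬝ᵥ ((∫ σ, Q τ σ ∂μ) *ᵥ w s)) τ ∂μ := by
      rw [hμd, setIntegral_indicator measurableSet_Ioc,
        Set.inter_eq_self_of_subset_right hsubt]
    rw [e2]
    have hint_ts : Integrable
        (fun r : ℝ × ℝ => u r.1 t ⬝ᵥ (P2 r.1 r.2 *ᵥ u r.2 s)) (μ.prod μ) := by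
      refine Integrable.mono' (integrable_const (D2 * (‖w t‖ * ‖w s‖))) ?_
        (ae_of_all _ fun r => by simpa using hg2b r.1 r.2 t s)
      exact (measurable_dot_mulVec
        (humeas.comp (measurable_fst.prodMk measurable_const))
        (fun i j => hP2meas i j)
        (humeas.comp (measurable_snd.prodMk measurable_const))).aestronglyMeasurable
    have e3 : (∫ τ, (Set.Ioc t t1).indicator
          (fun τ => w t ⬝ᵥ ((∫ σ, Q τ σ ∂μ) *ᵥ w s)) τ ∂μ)
        = ∫ τ, ∫ σ, u τ t ⬝ᵥ (P2 τ σ *ᵥ u σ s) ∂μ ∂μ := by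
      refine MeasureTheory.integral_congr_ae ?_
      filter_upwards [hae] with τ hτS
      by_cases hτ : τ ∈ Set.Ioc t t1
      · rw [Set.indicator_of_mem hτ]
        have h4 := (quadL (w t) (w s)).integral_comp_comm (hIone τ hτ)
        change (∫ σ, w t ⬝ᵥ (Q τ σ *ᵥ w s) ∂μ) = w t ⬝ᵥ ((∫ σ, Q τ σ ∂μ) *ᵥ w s) at h4
        rw [← h4]
        refine MeasureTheory.integral_congr_ae ?_
        filter_upwards [hae] with σ hσS
        by_cases hσ : σ ∈ Set.Ioc s t1
        · simp only [hQd]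
          rw [Set.indicator_of_mem hσ]
          simp only [hNd]
          rw [quad_triple, hu_pos htI.1.le hτ.1 hτ.2, hu_pos hsI.1.le hσ.1 hσ.2]
        · simp only [hQd]
          rw [Set.indicator_of_notMem hσ]
          have hu0 : u σ s = 0 := hu_neg fun hc => hσ ⟨hc.2.1, hc.2.2⟩
          simp [hu0]
      · rw [Set.indicator_of_notMem hτ]
        have hu0 : u τ t = 0 := hu_neg fun hc => hτ ⟨hc.2.1, hc.2.2⟩
        symm
        simp [hu0]
    rw [e3]
    simp only [hF2d]
    exact (MeasureTheory.integral_prod _ hint_ts).symm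
  -- negativity of the four pieces
  have neg0 : (∫ t, ∫ s, F0 t s ∂μ ∂μ) ≤ 0 := by
    have hinner : ∀ t, (∫ s, F0 t s ∂μ) = u t1 t ⬝ᵥ (P0 *ᵥ z t1) := by
      intro t
      have h := (dotMulL (u t1 t) P0).integral_comp_comm (hu_int t1)
      simp only [dotMulL_apply] at h
      calc (∫ s, F0 t s ∂μ) = ∫ s, u t1 t ⬝ᵥ (P0 *ᵥ u t1 s) ∂μ := by simp only [hF0d]
        _ = u t1 t ⬝ᵥ (P0 *ᵥ ∫ s, u t1 s ∂μ) := h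
        _ = u t1 t ⬝ᵥ (P0 *ᵥ z t1) := by simp only [hzd]
    calc (∫ t, ∫ s, F0 t s ∂μ ∂μ) = ∫ t, u t1 t ⬝ᵥ (P0 *ᵥ z t1) ∂μ :=
          MeasureTheory.integral_congr_ae (ae_of_all _ hinner)
      _ = (∫ t, u t1 t ∂μ) ⬝ᵥ (P0 *ᵥ z t1) := by
          have h := (dotL (P0 *ᵥ z t1)).integral_comp_comm (hu_int t1)
          simp only [dotL_apply] at h
          exact h
      _ = z t1 ⬝ᵥ (P0 *ᵥ z t1) := by simp only [hzd]
      _ ≤ 0 := hP0 _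
  have neg1 : (∫ t, ∫ s, F1 t s ∂μ ∂μ) ≤ 0 := by
    have step1 : ∀ t, (∫ s, F1 t s ∂μ) = ∫ σ, u σ t ⬝ᵥ (P1 σ *ᵥ z σ) ∂μ := by
      intro t
      have hswap : (∫ s, ∫ σ, u σ t ⬝ᵥ (P1 σ *ᵥ u σ s) ∂μ ∂μ)
          = ∫ σ, ∫ s, u σ t ⬝ᵥ (P1 σ *ᵥ u σ s) ∂μ ∂μ := by
        apply MeasureTheory.integral_integral_swap
        show Integrable (fun q : ℝ × ℝ => u q.2 t ⬝ᵥ (P1 q.2 *ᵥ u q.2 q.1)) (μ.prod μ)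
        refine Integrable.mono' (integrable_comp_fst (hwn.const_mul (D1 * ‖w t‖))) ?_
          (ae_of_all _ fun q => by simpa using (hg1b q.2 t q.1).trans_eq (by ring))
        exact (measurable_dot_mulVec
          (humeas.comp (measurable_snd.prodMk measurable_const))
          (fun i j => (hP1meas i j).comp measurable_snd)
          (humeas.comp (measurable_snd.prodMk measurable_fst))).aestronglyMeasurable
      have hinner : ∀ σ, (∫ s, u σ t ⬝ᵥ (P1 σ *ᵥ u σ s) ∂μ) = u σ t ⬝ᵥ (P1 σ *ᵥ z σ) := by
        intro σ
        have h := (dotMulL (u σ t) (P1 σ)).integral_comp_comm (hu_int σ)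
        simp only [dotMulL_apply] at h
        simpa only [hzd] using h
      calc (∫ s, F1 t s ∂μ) = ∫ s, ∫ σ, u σ t ⬝ᵥ (P1 σ *ᵥ u σ s) ∂μ ∂μ := by
            simp only [hF1d]
        _ = ∫ σ, ∫ s, u σ t ⬝ᵥ (P1 σ *ᵥ u σ s) ∂μ ∂μ := hswap
        _ = ∫ σ, u σ t ⬝ᵥ (P1 σ *ᵥ z σ) ∂μ :=
            MeasureTheory.integral_congr_ae (ae_of_all _ hinner)
    have hswap2 : (∫ t, ∫ σ, u σ t ⬝ᵥ (P1 σ *ᵥ z σ) ∂μ ∂μ)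
        = ∫ σ, ∫ t, u σ t ⬝ᵥ (P1 σ *ᵥ z σ) ∂μ ∂μ := by
      apply MeasureTheory.integral_integral_swap
      show Integrable (fun q : ℝ × ℝ => u q.2 q.1 ⬝ᵥ (P1 q.2 *ᵥ z q.2)) (μ.prod μ)
      refine Integrable.mono' (integrable_comp_fst (hwn.const_mul E1)) ?_
        (ae_of_all _ fun q => by simpa using hh1b q.2 q.1)
      exact (measurable_dot_mulVec
        (humeas.comp (measurable_snd.prodMk measurable_fst))
        (fun i j => (hP1meas i j).comp measurable_snd)
        (hzm.comp measurable_snd)).aestronglyMeasurable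
    have hfinal : ∀ σ, (∫ t, u σ t ⬝ᵥ (P1 σ *ᵥ z σ) ∂μ) = z σ ⬝ᵥ (P1 σ *ᵥ z σ) := by
      intro σ
      have h := (dotL (P1 σ *ᵥ z σ)).integral_comp_comm (hu_int σ)
      simp only [dotL_apply] at h
      simpa only [hzd] using h
    calc (∫ t, ∫ s, F1 t s ∂μ ∂μ) = ∫ t, ∫ σ, u σ t ⬝ᵥ (P1 σ *ᵥ z σ) ∂μ ∂μ :=
          MeasureTheory.integral_congr_ae (ae_of_all _ step1)
      _ = ∫ σ, ∫ t, u σ t ⬝ᵥ (P1 σ *ᵥ z σ) ∂μ ∂μ := hswap2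
      _ = ∫ σ, z σ ⬝ᵥ (P1 σ *ᵥ z σ) ∂μ :=
          MeasureTheory.integral_congr_ae (ae_of_all _ hfinal)
      _ ≤ 0 := by
          refine integral_nonpos_of_ae ?_
          filter_upwards [hP1] with σ hσ
          exact hσ.2 (z σ)
  have neg2 : (∫ t, ∫ s, F2 t s ∂μ ∂μ) ≤ 0 := by
    have step1 : ∀ t, (∫ s, F2 t s ∂μ)
        = ∫ r : ℝ × ℝ, u r.1 t ⬝ᵥ (P2 r.1 r.2 *ᵥ z r.2) ∂(μ.prod μ) := by
      intro t
      have hswap : (∫ s, ∫ r : ℝ × ℝ, u r.1 t ⬝ᵥ (P2 r.1 r.2 *ᵥ u r.2 s) ∂(μ.prod μ) ∂μ)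
          = ∫ r : ℝ × ℝ, ∫ s, u r.1 t ⬝ᵥ (P2 r.1 r.2 *ᵥ u r.2 s) ∂μ ∂(μ.prod μ) := by
        apply MeasureTheory.integral_integral_swap
        show Integrable (fun q : ℝ × (ℝ × ℝ) =>
          u q.2.1 t ⬝ᵥ (P2 q.2.1 q.2.2 *ᵥ u q.2.2 q.1)) (μ.prod (μ.prod μ))
        refine Integrable.mono' (integrable_comp_fst (hwn.const_mul (D2 * ‖w t‖))) ?_
          (ae_of_all _ fun q => by simpa using (hg2b q.2.1 q.2.2 t q.1).trans_eq (by ring))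
        exact (measurable_dot_mulVec
          (humeas.comp ((measurable_fst.comp measurable_snd).prodMk measurable_const))
          (fun i j => (hP2meas i j).comp measurable_snd)
          (humeas.comp ((measurable_snd.comp measurable_snd).prodMk
            measurable_fst))).aestronglyMeasurable
      have hinner : ∀ r : ℝ × ℝ, (∫ s, u r.1 t ⬝ᵥ (P2 r.1 r.2 *ᵥ u r.2 s) ∂μ)
          = u r.1 t ⬝ᵥ (P2 r.1 r.2 *ᵥ z r.2) := by
        intro r
        have h := (dotMulL (u r.1 t) (P2 r.1 r.2)).integral_comp_comm (hu_int r.2)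
        simp only [dotMulL_apply] at h
        simpa only [hzd] using h
      calc (∫ s, F2 t s ∂μ)
          = ∫ s, ∫ r : ℝ × ℝ, u r.1 t ⬝ᵥ (P2 r.1 r.2 *ᵥ u r.2 s) ∂(μ.prod μ) ∂μ := by
            simp only [hF2d]
        _ = ∫ r : ℝ × ℝ, ∫ s, u r.1 t ⬝ᵥ (P2 r.1 r.2 *ᵥ u r.2 s) ∂μ ∂(μ.prod μ) := hswap
        _ = ∫ r : ℝ × ℝ, u r.1 t ⬝ᵥ (P2 r.1 r.2 *ᵥ z r.2) ∂(μ.prod μ) :=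
            MeasureTheory.integral_congr_ae (ae_of_all _ hinner)
    have hswap2 : (∫ t, ∫ r : ℝ × ℝ, u r.1 t ⬝ᵥ (P2 r.1 r.2 *ᵥ z r.2) ∂(μ.prod μ) ∂μ)
        = ∫ r : ℝ × ℝ, ∫ t, u r.1 t ⬝ᵥ (P2 r.1 r.2 *ᵥ z r.2) ∂μ ∂(μ.prod μ) := by
      apply MeasureTheory.integral_integral_swap
      show Integrable (fun q : ℝ × (ℝ × ℝ) =>
        u q.2.1 q.1 ⬝ᵥ (P2 q.2.1 q.2.2 *ᵥ z q.2.2)) (μ.prod (μ.prod μ))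
      refine Integrable.mono' (integrable_comp_fst (hwn.const_mul E2)) ?_
        (ae_of_all _ fun q => by simpa using hh2b q.2.1 q.2.2 q.1)
      exact (measurable_dot_mulVec
        (humeas.comp ((measurable_fst.comp measurable_snd).prodMk measurable_fst))
        (fun i j => (hP2meas i j).comp measurable_snd)
        ((hzm.comp (measurable_snd.comp measurable_snd)))).aestronglyMeasurable
    have hfinal : ∀ r : ℝ × ℝ, (∫ t, u r.1 t ⬝ᵥ (P2 r.1 r.2 *ᵥ z r.2) ∂μ)
        = z r.1 ⬝ᵥ (P2 r.1 r.2 *ᵥ z r.2) := by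
      intro r
      have h := (dotL (P2 r.1 r.2 *ᵥ z r.2)).integral_comp_comm (hu_int r.1)
      simp only [dotL_apply] at h
      simpa only [hzd] using h
    have hIntzz : Integrable (fun r : ℝ × ℝ => z r.1 ⬝ᵥ (P2 r.1 r.2 *ᵥ z r.2)) (μ.prod μ) := by
      refine Integrable.mono' (integrable_const E3) ?_
        (ae_of_all _ fun r => by simpa using hzz2b r.1 r.2)
      exact (measurable_dot_mulVec (hzm.comp measurable_fst)
        (fun i j => hP2meas i j) (hzm.comp measurable_snd)).aestronglyMeasurable
    calc (∫ t, ∫ s, F2 t s ∂μ ∂μ)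
        = ∫ t, ∫ r : ℝ × ℝ, u r.1 t ⬝ᵥ (P2 r.1 r.2 *ᵥ z r.2) ∂(μ.prod μ) ∂μ :=
          MeasureTheory.integral_congr_ae (ae_of_all _ step1)
      _ = ∫ r : ℝ × ℝ, ∫ t, u r.1 t ⬝ᵥ (P2 r.1 r.2 *ᵥ z r.2) ∂μ ∂(μ.prod μ) := hswap2
      _ = ∫ r : ℝ × ℝ, z r.1 ⬝ᵥ (P2 r.1 r.2 *ᵥ z r.2) ∂(μ.prod μ) :=
          MeasureTheory.integral_congr_ae (ae_of_all _ hfinal)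
      _ = ∫ τ, ∫ σ, z τ ⬝ᵥ (P2 τ σ *ᵥ z σ) ∂μ ∂μ := MeasureTheory.integral_prod _ hIntzz
      _ ≤ 0 := hP2 z hzmem
  have neg3 : (∫ t, ∫ s, F3 t s ∂μ ∂μ) ≤ 0 := by
    have h := hR2 w hw
    simp only [hF3d]
    exact h
  -- final assembly
  calc (∫ t, ∫ s, w t ⬝ᵥ (((C1 t1 t)ᵀ * P0 * C1 t1 s
          + (∫ σ in (max t s)..t1, (C1 σ t)ᵀ * P1 σ * C1 σ s)
          + (∫ τ in t..t1, ∫ σ in s..t1, (C1 τ t)ᵀ * P2 τ σ * C1 σ s)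
          + R2 t s) *ᵥ w s) ∂μ ∂μ)
      = ∫ t, ((∫ s, F0 t s ∂μ) + (∫ s, F1 t s ∂μ)
          + (∫ s, F2 t s ∂μ) + (∫ s, F3 t s ∂μ)) ∂μ := by
        refine MeasureTheory.integral_congr_ae ?_
        filter_upwards [haeI] with t htI
        have hsum : ∀ᵐ s ∂μ, w t ⬝ᵥ (((C1 t1 t)ᵀ * P0 * C1 t1 s
            + (∫ σ in (max t s)..t1, (C1 σ t)ᵀ * P1 σ * C1 σ s)
            + (∫ τ in t..t1, ∫ σ in s..t1, (C1 τ t)ᵀ * P2 τ σ * C1 σ s)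
            + R2 t s) *ᵥ w s) = F0 t s + F1 t s + F2 t s + F3 t s := by
          filter_upwards [haeI] with s hsI
          rw [Matrix.add_mulVec, Matrix.add_mulVec, Matrix.add_mulVec,
            dotProduct_add, dotProduct_add, dotProduct_add,
            key0 t htI s hsI, key1 t htI s hsI, key2 t htI s hsI]
        rw [MeasureTheory.integral_congr_ae hsum]
        have htS : t ∈ S := by rw [hSd]; exact Set.Ioo_subset_Ioc_self htI
        have hA2 : Integrable (fun s => F0 t s + F1 t s) μ := (hInt0 t).add (hInt1 t)
        have hA3 : Integrable (fun s => F0 t s + F1 t s + F2 t s) μ := hA2.add (hInt2 t)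
        rw [MeasureTheory.integral_add hA3 (hInt3 t htS),
          MeasureTheory.integral_add hA2 (hInt2 t),
          MeasureTheory.integral_add (hInt0 t) (hInt1 t)]
    _ = (∫ t, ∫ s, F0 t s ∂μ ∂μ) + (∫ t, ∫ s, F1 t s ∂μ ∂μ)
        + (∫ t, ∫ s, F2 t s ∂μ ∂μ) + (∫ t, ∫ s, F3 t s ∂μ ∂μ) := by
        have hB2 : Integrable (fun t => (∫ s, F0 t s ∂μ) + (∫ s, F1 t s ∂μ)) μ := hG0.add hG1
        have hB3 : Integrable (fun t => (∫ s, F0 t s ∂μ) + (∫ s, F1 t s ∂μ)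
            + (∫ s, F2 t s ∂μ)) μ := hB2.add hG2
        rw [MeasureTheory.integral_add hB3 hG3,
          MeasureTheory.integral_add hB2 hG2,
          MeasureTheory.integral_add hG0 hG1]
    _ ≤ 0 := by linarith [neg0, neg1, neg2, neg3]




/-- **Nonpositivity of the kernel `L₂₂` of (4.6)**: if `P₀`, `P₁`, `P₂` and `R₂` are
negative (semi)definite as indicated, then `∫∫ w(t)ᵀL₂₂(t,s)w(s) ds dt ≤ 0` for every
`w ∈ L²(t₀,t₁;ℝⁿ)`. -/
theorem L22_kernel_nonpos
    (p n : ℕ) (t0 t1 : ℝ) (ht : t0 < t1)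
    (C1 : ℝ → ℝ → Matrix (Fin p) (Fin n) ℝ)
    (P0 : Matrix (Fin p) (Fin p) ℝ)
    (P1 : ℝ → Matrix (Fin p) (Fin p) ℝ)
    (P2 : ℝ → ℝ → Matrix (Fin p) (Fin p) ℝ)
    (R2 : ℝ → ℝ → Matrix (Fin n) (Fin n) ℝ)
    -- C₁ bounded measurable on Δ
    (hC1meas : ∀ i j, Measurable fun q : ℝ × ℝ => C1 q.1 q.2 i j)
    (hC1bdd : ∃ M, ∀ t s, t0 ≤ s → s ≤ t → t ≤ t1 → ∀ i j, |C1 t s i j| ≤ M)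
    -- P₀ symmetric negative semidefinite
    (hP0sym : P0ᵀ = P0)
    (hP0 : ∀ z : Fin p → ℝ, z ⬝ᵥ (P0 *ᵥ z) ≤ 0)
    -- P₁ bounded measurable, symmetric negative semidefinite a.e.
    (hP1meas : ∀ i j, Measurable fun t => P1 t i j)
    (hP1bdd : ∃ M, ∀ t ∈ Set.Icc t0 t1, ∀ i j, |P1 t i j| ≤ M)
    (hP1 : ∀ᵐ t ∂(volume.restrict (Set.Ioc t0 t1)),
      (P1 t)ᵀ = P1 t ∧ ∀ z : Fin p → ℝ, z ⬝ᵥ (P1 t *ᵥ z) ≤ 0)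
    -- P₂ bounded measurable, symmetric, with nonpositive integral quadratic form
    (hP2meas : ∀ i j, Measurable fun q : ℝ × ℝ => P2 q.1 q.2 i j)
    (hP2bdd : ∃ M, ∀ t ∈ Set.Icc t0 t1, ∀ s ∈ Set.Icc t0 t1, ∀ i j, |P2 t s i j| ≤ M)
    (hP2sym : ∀ t s, (P2 t s)ᵀ = P2 s t)
    (hP2 : ∀ z : ℝ → Fin p → ℝ, MemLp z 2 (volume.restrict (Set.Ioc t0 t1)) →
      (∫ t in Set.Ioc t0 t1, ∫ s in Set.Ioc t0 t1, z t ⬝ᵥ (P2 t s *ᵥ z s)) ≤ 0)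
    -- R₂ bounded measurable, symmetric, with nonpositive integral quadratic form
    (hR2meas : ∀ i j, Measurable fun q : ℝ × ℝ => R2 q.1 q.2 i j)
    (hR2bdd : ∃ M, ∀ t ∈ Set.Icc t0 t1, ∀ s ∈ Set.Icc t0 t1, ∀ i j, |R2 t s i j| ≤ M)
    (hR2sym : ∀ t s, (R2 t s)ᵀ = R2 s t)
    (hR2 : ∀ w : ℝ → Fin n → ℝ, MemLp w 2 (volume.restrict (Set.Ioc t0 t1)) →
      (∫ t in Set.Ioc t0 t1, ∫ s in Set.Ioc t0 t1, w t ⬝ᵥ (R2 t s *ᵥ w s)) ≤ 0) :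
    ∀ w : ℝ → Fin n → ℝ, MemLp w 2 (volume.restrict (Set.Ioc t0 t1)) →
      (∫ t in Set.Ioc t0 t1, ∫ s in Set.Ioc t0 t1,
        w t ⬝ᵥ (((C1 t1 t)ᵀ * P0 * C1 t1 s
          + (∫ σ in (max t s)..t1, (C1 σ t)ᵀ * P1 σ * C1 σ s)
          + (∫ τ in t..t1, ∫ σ in s..t1, (C1 τ t)ᵀ * P2 τ σ * C1 σ s)
          + R2 t s) *ᵥ w s)) ≤ 0 := by
  intro w hw
  have h1 := hw.aestronglyMeasurable.stronglyMeasurable_mk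
  have h2 := hw.aestronglyMeasurable.ae_eq_mk
  have hw' : MemLp (hw.aestronglyMeasurable.mk w) 2 (volume.restrict (Set.Ioc t0 t1)) :=
    hw.ae_eq h2
  have hmain := L22_aux p n t0 t1 ht C1 P0 P1 P2 R2 hC1meas hC1bdd hP0 hP1meas hP1bdd hP1
    hP2meas hP2bdd hP2 hR2meas hR2bdd hR2 (hw.aestronglyMeasurable.mk w) h1.measurable hw'
  refine le_trans (le_of_eq ?_) hmain
  refine integral_congr_ae ?_
  filter_upwards [h2] with t ht2
  refine integral_congr_ae ?_
  filter_upwards [h2] with s hs2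
  rw [ht2, hs2]
end
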